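/- arXiv:2310.03313 — 4 statements merged into one kernel-verified Lean document; each statement's English description precedes it below -/
import Mathlib

section
/- Let u = (u_0,…,u_r) and v = (v_0,…,v_r) be exponent vectors in ℕ^{r+1}, and for 1 ≤ j ≤ r set c_j := Σ_{k=j}^{r} (v_k − u_k) ∈ ℤ. If Σ_{k=0}^{r} u_k = Σ_{k=0}^{r} v_k and 0 ≤ c_j ≤ v_j for all 1 ≤ j ≤ r, then the coefficient of t^u in σ_ω(t^v) equals ∏_{j=1}^{r} C(v_j, c_j)·ω^{c_j}, where C(·,·) denotes the binomial coefficient; otherwise the coefficient of t^u in σ_ω(t^v) is 0. -/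
open MvPolynomial Finset

/-- The `R`-algebra endomorphism `σ_ω` of `R[t_0, …, t_r]` determined by
`σ_ω(t_0) = t_0` and `σ_ω(t_i) = t_i + ω·t_{i-1}` for `1 ≤ i ≤ r`. -/
noncomputable def sigmaOmega {R : Type*} [CommRing R] {r : ℕ} (ω : R) :
    MvPolynomial (Fin (r + 1)) R →ₐ[R] MvPolynomial (Fin (r + 1)) R :=
  aeval fun i : Fin (r + 1) =>
    if i.1 = 0 then X i
    else X i + C ω * X ⟨i.1 - 1, lt_of_le_of_lt (Nat.sub_le _ _) i.isLt⟩

section Aux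

open scoped Classical

variable {R : Type*} [CommRing R] {r : ℕ}


variable {R : Type*} [CommRing R] {r : ℕ}

def cf (u v : Fin (r+1) →₀ ℕ) (j : Fin (r+1)) : ℤ :=
  ∑ k ∈ Finset.univ.filter (fun k : Fin (r+1) => j ≤ k), ((v k : ℤ) - (u k : ℤ))

def Cond (u v : Fin (r+1) →₀ ℕ) : Prop :=
  (∑ k, u k) = (∑ k, v k) ∧
    ∀ j : Fin (r+1), 1 ≤ j.1 → 0 ≤ cf u v j ∧ cf u v j ≤ (v j : ℤ)

noncomputable def Fm (ω : R) (u v : Fin (r+1) →₀ ℕ) : R :=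
  if Cond u v then
    ∏ j ∈ Finset.univ.filter (fun j : Fin (r+1) => 1 ≤ j.1),
      (Nat.choose (v j) (cf u v j).toNat : R) * ω ^ (cf u v j).toNat
  else 0

lemma single_sum (i j : Fin (r+1)) :
    ∑ k ∈ Finset.univ.filter (fun k : Fin (r+1) => j ≤ k),
      ((Finsupp.single i 1 : Fin (r+1) →₀ ℕ) k : ℤ) = if j ≤ i then 1 else 0 := by
  simp only [Finsupp.single_apply]
  push_cast
  rw [Finset.sum_ite_eq]
  simp

lemma cf_add_right (u v : Fin (r+1) →₀ ℕ) (i j : Fin (r+1)) :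
    cf u (v + Finsupp.single i 1) j = cf u v j + (if j ≤ i then 1 else 0) := by
  unfold cf
  rw [← single_sum i j, ← Finset.sum_add_distrib]
  congr 1; ext k; push_cast [Finsupp.add_apply]; ring

lemma cf_add_left (u v : Fin (r+1) →₀ ℕ) (i j : Fin (r+1)) :
    cf (u + Finsupp.single i 1) v j = cf u v j - (if j ≤ i then 1 else 0) := by
  unfold cf
  rw [← single_sum i j, ← Finset.sum_sub_distrib]
  congr 1; ext k; push_cast [Finsupp.add_apply]; ring

lemma sum_add_single (v : Fin (r+1) →₀ ℕ) (i : Fin (r+1)) :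
    (∑ k, (v + Finsupp.single i 1 : Fin (r+1) →₀ ℕ) k) = (∑ k, v k) + 1 := by
  have h : ∀ k, (v + Finsupp.single i 1 : Fin (r+1) →₀ ℕ) k
      = v k + (Finsupp.single i 1 : Fin (r+1) →₀ ℕ) k := fun k => rfl
  simp only [h, Finset.sum_add_distrib]
  congr 1
  simp [Finsupp.single_apply]

lemma cf_zero_eq (u v : Fin (r+1) →₀ ℕ) :
    cf u v 0 = (∑ k, (v k : ℤ)) - ∑ k, (u k : ℤ) := by
  unfold cf
  rw [Finset.filter_true_of_mem (by intro k _; exact Fin.zero_le k), Finset.sum_sub_distrib]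

lemma cf_split (u v : Fin (r+1) →₀ ℕ) (j : Fin (r+1)) :
    cf u v j = ((v j : ℤ) - u j) +
      ∑ k ∈ Finset.univ.filter (fun k : Fin (r+1) => j < k), ((v k : ℤ) - (u k : ℤ)) := by
  unfold cf
  have h : Finset.univ.filter (fun k : Fin (r+1) => j ≤ k)
      = insert j (Finset.univ.filter (fun k : Fin (r+1) => j < k)) := by
    ext k
    simp [le_iff_lt_or_eq, or_comm, eq_comm]
  rw [h, Finset.sum_insert (by simp)]

lemma cf_last (u v : Fin (r+1) →₀ ℕ) :
    cf u v (Fin.last r) = (v (Fin.last r) : ℤ) - u (Fin.last r) := by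
  rw [cf_split]
  have h : Finset.univ.filter (fun k : Fin (r+1) => Fin.last r < k) = ∅ := by
    ext k
    simp only [Finset.mem_filter, Finset.mem_univ, true_and, Finset.notMem_empty, iff_false]
    exact not_lt.mpr (Fin.le_last k)
  simp [h]

lemma cf_succ (u v : Fin (r+1) →₀ ℕ) (j : Fin (r+1)) (h : j.1 < r) :
    cf u v j = ((v j : ℤ) - u j) + cf u v ⟨j.1+1, by omega⟩ := by
  rw [cf_split]
  congr 1

lemma Vapp (v : Fin (r+1) →₀ ℕ) (i j : Fin (r+1)) :
    ((v + Finsupp.single i 1 : Fin (r+1) →₀ ℕ) j : ℤ) = (v j : ℤ) + if j = i then 1 else 0 := by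
  have h : (v + Finsupp.single i 1 : Fin (r+1) →₀ ℕ) j
      = v j + (Finsupp.single i 1 : Fin (r+1) →₀ ℕ) j := rfl
  rw [h, Finsupp.single_apply]
  push_cast
  by_cases hij : j = i
  · simp [hij]
  · simp [hij, Ne.symm hij]

lemma indicator_diff (i i' j : Fin (r+1)) (h : i'.1 + 1 = i.1) :
    (if j ≤ i then (1:ℤ) else 0) - (if j ≤ i' then 1 else 0) = if j = i then 1 else 0 := by
  have hle : (j ≤ i) ↔ j.1 ≤ i.1 := Fin.le_def
  have hle' : (j ≤ i') ↔ j.1 ≤ i'.1 := Fin.le_def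
  have heq : (j = i) ↔ j.1 = i.1 := Fin.ext_iff
  split_ifs with h1 h2 h3 h2 <;>
    simp only [hle, hle', heq] at * <;> omega

lemma cf_shift_same (w v : Fin (r+1) →₀ ℕ) (i j : Fin (r+1)) :
    cf (w + Finsupp.single i 1) (v + Finsupp.single i 1) j = cf w v j := by
  rw [cf_add_left, cf_add_right]; ring

lemma cf_shift_pred (w v : Fin (r+1) →₀ ℕ) (i i' j : Fin (r+1)) (h : i'.1 + 1 = i.1) :
    cf (w + Finsupp.single i' 1) (v + Finsupp.single i 1) j
      = cf w v j + (if j = i then 1 else 0) := by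
  rw [cf_add_left, cf_add_right, ← indicator_diff i i' j h]; ring

lemma Fm_of_cond {ω : R} {u v : Fin (r+1) →₀ ℕ} (h : Cond u v) :
    Fm ω u v = ∏ j ∈ Finset.univ.filter (fun j : Fin (r+1) => 1 ≤ j.1),
      (Nat.choose (v j) (cf u v j).toNat : R) * ω ^ (cf u v j).toNat := if_pos h

lemma Fm_of_not {ω : R} {u v : Fin (r+1) →₀ ℕ} (h : ¬ Cond u v) : Fm ω u v = 0 := if_neg h

lemma Cond_shift_same {w v : Fin (r+1) →₀ ℕ} (i : Fin (r+1)) (h : Cond w v) :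
    Cond (w + Finsupp.single i 1) (v + Finsupp.single i 1) := by
  obtain ⟨hs, hj⟩ := h
  constructor
  · rw [sum_add_single, sum_add_single, hs]
  · intro j hj1
    rw [cf_shift_same, Vapp]
    obtain ⟨h1, h2⟩ := hj j hj1
    constructor
    · exact h1
    · split_ifs <;> omega

lemma Cond_shift_pred {w v : Fin (r+1) →₀ ℕ} (i i' : Fin (r+1)) (hii : i'.1 + 1 = i.1)
    (h : Cond w v) : Cond (w + Finsupp.single i' 1) (v + Finsupp.single i 1) := by
  obtain ⟨hs, hj⟩ := h
  constructor
  · rw [sum_add_single, sum_add_single, hs]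
  · intro j hj1
    rw [cf_shift_pred w v i i' j hii, Vapp]
    obtain ⟨h1, h2⟩ := hj j hj1
    constructor
    · split_ifs <;> omega
    · split_ifs <;> omega

lemma sub_single_add {u : Fin (r+1) →₀ ℕ} {i : Fin (r+1)} (h : u i ≠ 0) :
    (u - Finsupp.single i 1) + Finsupp.single i 1 = u :=
  tsub_add_cancel_of_le (Finsupp.single_le_iff.mpr (Nat.one_le_iff_ne_zero.mpr h))

lemma Vapp_ne (v : Fin (r+1) →₀ ℕ) {i j : Fin (r+1)} (h : j ≠ i) :
    (v + Finsupp.single i 1 : Fin (r+1) →₀ ℕ) j = v j := by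
  have h' : (v + Finsupp.single i 1 : Fin (r+1) →₀ ℕ) j
      = v j + (Finsupp.single i 1 : Fin (r+1) →₀ ℕ) j := rfl
  rw [h', Finsupp.single_apply, if_neg (fun hh => h (by exact (hh ▸ rfl : j = i) ▸ rfl))]
  · ring

lemma Cond_unshift_zero {w v : Fin (r+1) →₀ ℕ}
    (h : Cond (w + Finsupp.single 0 1) (v + Finsupp.single 0 1)) : Cond w v := by
  obtain ⟨hs, hj⟩ := h
  rw [sum_add_single, sum_add_single] at hs
  constructor
  · omega
  · intro j hj1
    obtain ⟨h1, h2⟩ := hj j hj1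
    rw [cf_shift_same] at h1 h2
    have hne : j ≠ (0 : Fin (r+1)) := by
      intro hh
      rw [hh] at hj1
      simp at hj1
    rw [Vapp_ne v hne] at h2
    exact ⟨h1, h2⟩

lemma RecA (hr : 1 ≤ r) (ω : R) (u v : Fin (r+1) →₀ ℕ) :
    Fm ω u (v + Finsupp.single 0 1) =
      if (0 : Fin (r+1)) ∈ u.support then Fm ω (u - Finsupp.single 0 1) v else 0 := by
  by_cases hu : (0 : Fin (r+1)) ∈ u.support
  · rw [if_pos hu]
    have hu0 : u 0 ≠ 0 := Finsupp.mem_support_iff.mp hu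
    have huw : (u - Finsupp.single 0 1) + Finsupp.single 0 1 = u := sub_single_add hu0
    set w := u - Finsupp.single 0 1 with hwdef
    rw [← huw]
    by_cases hC : Cond w v
    · rw [Fm_of_cond (Cond_shift_same 0 hC), Fm_of_cond hC]
      apply Finset.prod_congr rfl
      intro j hjm
      have hj1 : 1 ≤ j.1 := (Finset.mem_filter.mp hjm).2
      have hne : j ≠ (0 : Fin (r+1)) := by
        intro hh; rw [hh] at hj1; simp at hj1
      rw [cf_shift_same, Vapp_ne v hne]
    · rw [Fm_of_not hC, Fm_of_not (fun hC' => hC (Cond_unshift_zero hC'))]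
  · rw [if_neg hu]
    apply Fm_of_not
    rintro ⟨hs, hj⟩
    have hu0 : u 0 = 0 := by
      simpa using Finsupp.notMem_support_iff.mp hu
    have hj1 : (1:ℕ) ≤ (⟨1, by omega⟩ : Fin (r+1)).1 := le_refl 1
    have h1 := (hj ⟨1, by omega⟩ hj1).1
    have h0 : cf u (v + Finsupp.single 0 1) (0 : Fin (r+1)) = 0 := by
      rw [cf_zero_eq, ← Nat.cast_sum, ← Nat.cast_sum, ← hs, sub_self]
    have hsucc := cf_succ u (v + Finsupp.single 0 1) (0 : Fin (r+1)) (by simp; omega)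
    have hV0 : ((v + Finsupp.single 0 1 : Fin (r+1) →₀ ℕ) (0 : Fin (r+1)) : ℤ)
        = (v 0 : ℤ) + 1 := by
      rw [Vapp]; simp
    have hz : ((0 : Fin (r+1)).1) = 0 := rfl
    rw [h0, hV0, hu0] at hsucc
    have : (⟨(0 : Fin (r+1)).1 + 1, by omega⟩ : Fin (r+1)) = ⟨1, by omega⟩ := by
      apply Fin.ext; simp
    rw [this] at hsucc
    push_cast at hsucc
    linarith

lemma cf_zero_of_sum {u V : Fin (r+1) →₀ ℕ} (hs : (∑ k, u k) = ∑ k, V k) :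
    cf u V 0 = 0 := by
  rw [cf_zero_eq, ← Nat.cast_sum, ← Nat.cast_sum, ← hs, sub_self]

lemma RecB (ω : R) (u v : Fin (r+1) →₀ ℕ) (i : Fin (r+1)) (hi1 : 1 ≤ i.1) :
    Fm ω u (v + Finsupp.single i 1) =
      (if i ∈ u.support then Fm ω (u - Finsupp.single i 1) v else 0) +
      ω * (if (⟨i.1 - 1, lt_of_le_of_lt (Nat.sub_le _ _) i.isLt⟩ : Fin (r+1)) ∈ u.support
            then Fm ω (u - Finsupp.single ⟨i.1 - 1, lt_of_le_of_lt (Nat.sub_le _ _) i.isLt⟩ 1) v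
            else 0) := by
  set i' : Fin (r+1) := ⟨i.1 - 1, lt_of_le_of_lt (Nat.sub_le _ _) i.isLt⟩ with hi'def
  have hval : i'.1 = i.1 - 1 := rfl
  have hii : i'.1 + 1 = i.1 := by omega
  set V := v + Finsupp.single i 1 with hVdef
  by_cases hC : Cond u V
  · obtain ⟨hs, hj⟩ := hC
    -- basic facts
    have hVi : (V i : ℤ) = (v i : ℤ) + 1 := by rw [hVdef, Vapp, if_pos rfl]
    have hVne : ∀ j : Fin (r+1), j ≠ i → (V j : ℕ) = v j := fun j hj' => Vapp_ne v hj'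
    have hdi := hj i hi1
    -- tail fact
    obtain ⟨sI, hsI0, hdieq⟩ : ∃ s : ℤ, 0 ≤ s ∧ cf u V i = (V i : ℤ) - u i + s := by
      by_cases hir : i.1 < r
      · exact ⟨cf u V ⟨i.1 + 1, by omega⟩,
          (hj ⟨i.1 + 1, by omega⟩ (by simp)).1, cf_succ u V i hir⟩
      · have hieq : i = Fin.last r := Fin.ext (by simp [Fin.last]; omega)
        exact ⟨0, le_refl 0, by rw [hieq, cf_last]; ring⟩
    -- bound on u i'
    have hui'ge : cf u V i ≤ (u i' : ℤ) := by
      by_cases hi'1 : 1 ≤ i'.1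
      · have h' := hj i' hi'1
        have hne : i' ≠ i := by
          intro hh; rw [hh] at hii; omega
        have hsucc : cf u V i' = ((V i' : ℕ) : ℤ) - u i' + cf u V i := by
          have hi'r : i'.1 < r := by have h4 := i.isLt; omega
          have h2 := cf_succ u V i' hi'r
          have h3 : (⟨i'.1 + 1, by omega⟩ : Fin (r+1)) = i := Fin.ext hii
          rw [h3] at h2
          exact h2
        have hVi' : ((V i' : ℕ) : ℤ) = (v i' : ℤ) := by rw [hVne i' hne]
        have := h'.2
        rw [hVi'] at hsucc
        rw [hVne i' hne] at this
        linarith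
      · have hi'0 : i' = 0 := Fin.ext (by simp only [Fin.val_zero]; omega)
        have h0 : cf u V 0 = 0 := cf_zero_of_sum hs
        have hsucc : cf u V 0 = ((V (0 : Fin (r+1)) : ℕ) : ℤ) - u 0 + cf u V i := by
          have h0r : (0 : Fin (r+1)).1 < r := by
            have h4 := i.isLt; simp only [Fin.val_zero]; omega
          have h2 := cf_succ u V (0 : Fin (r+1)) h0r
          have h3 : (⟨(0 : Fin (r+1)).1 + 1, by omega⟩ : Fin (r+1)) = i := by
            apply Fin.ext; simp; omega
          rw [h3] at h2
          exact h2
        rw [h0] at hsucc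
        rw [hi'0]
        have hV0 : ((V (0 : Fin (r+1)) : ℕ) : ℤ) = (v 0 : ℤ) := by
          apply congrArg
          apply hVne
          intro hh
          rw [← hh] at hii
          simp at hii
        rw [hV0] at hsucc
        have : (0:ℤ) ≤ (v 0 : ℤ) := by positivity
        linarith
    -- main computation
    have hdi0 : 0 ≤ cf u V i := hdi.1
    have hdiV : cf u V i ≤ (v i : ℤ) + 1 := by rw [← hVi]; exact hdi.2
    have hViN : (V i : ℕ) = v i + 1 := by exact_mod_cast hVi
    have hmdef : ((cf u V i).toNat : ℤ) = cf u V i := Int.toNat_of_nonneg hdi0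
    set m := (cf u V i).toNat with hm
    have hifil : i ∈ Finset.univ.filter (fun j : Fin (r+1) => 1 ≤ j.1) :=
      Finset.mem_filter.mpr ⟨Finset.mem_univ _, hi1⟩
    set P : R := ∏ j ∈ (Finset.univ.filter (fun j : Fin (r+1) => 1 ≤ j.1)).erase i,
      (Nat.choose (v j) (cf u V j).toNat : R) * ω ^ (cf u V j).toNat with hPdef
    have hsV : (∑ k, V k) = (∑ k, v k) + 1 := by rw [hVdef]; exact sum_add_single v i
    have hLHS : Fm ω u V = (Nat.choose (v i + 1) m : R) * ω ^ m * P := by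
      rw [Fm_of_cond ⟨hs, hj⟩, ← Finset.mul_prod_erase _ _ hifil, hViN, ← hm, hPdef,
        mul_assoc, mul_assoc]
      congr 2
      apply Finset.prod_congr rfl
      intro j hjm
      rw [hVne j (Finset.ne_of_mem_erase hjm)]
    rw [hLHS]
    have hT1 : (if i ∈ u.support then Fm ω (u - Finsupp.single i 1) v else 0)
        = (Nat.choose (v i) m : R) * ω ^ m * P := by
      by_cases hdm : cf u V i ≤ (v i : ℤ)
      · have hui : u i ≠ 0 := by
          have h1 : 1 ≤ (u i : ℤ) := by rw [hVi] at hdieq; omega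
          have h2 : 1 ≤ u i := by exact_mod_cast h1
          omega
        rw [if_pos (Finsupp.mem_support_iff.mpr hui)]
        have hw : (u - Finsupp.single i 1) + Finsupp.single i 1 = u := sub_single_add hui
        set w := u - Finsupp.single i 1 with hwdef
        have hcfw : ∀ j, cf w v j = cf u V j := by
          intro j
          rw [hVdef, ← hw]
          exact (cf_shift_same w v i j).symm
        have hsw : (∑ k, u k) = (∑ k, w k) + 1 := by rw [← hw]; exact sum_add_single w i
        have hCw : Cond w v := by
          constructor
          · omega
          · intro j hj1
            rw [hcfw j]
            refine ⟨(hj j hj1).1, ?_⟩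
            by_cases hji : j = i
            · rw [hji]; exact hdm
            · have := (hj j hj1).2
              rw [← hVne j hji]
              exact this
        rw [Fm_of_cond hCw, ← Finset.mul_prod_erase _ _ hifil, hcfw i, ← hm, hPdef,
          mul_assoc, mul_assoc]
        congr 2
        apply Finset.prod_congr rfl
        intro j hjm
        rw [hcfw j]
      · have hmv : m = v i + 1 := by omega
        have hch : (Nat.choose (v i) m : R) = 0 := by
          rw [hmv, Nat.choose_eq_zero_of_lt (by omega)]
          exact Nat.cast_zero
        rw [hch]
        have hz : (if i ∈ u.support then Fm ω (u - Finsupp.single i 1) v else 0) = 0 := by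
          split_ifs with h
          · apply Fm_of_not
            rintro ⟨hsw, hjw⟩
            have hui : u i ≠ 0 := Finsupp.mem_support_iff.mp h
            have hw : (u - Finsupp.single i 1) + Finsupp.single i 1 = u := sub_single_add hui
            have hcf : cf (u - Finsupp.single i 1) v i = cf u V i := by
              conv_rhs => rw [hVdef, ← hw]
              exact (cf_shift_same _ v i i).symm
            have h2 := (hjw i hi1).2
            rw [hcf] at h2
            exact hdm h2
          · rfl
        rw [hz]
        ring
    rw [hT1]
    by_cases hd1 : 1 ≤ cf u V i
    · have hm1 : 1 ≤ m := by omega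
      have hui' : u i' ≠ 0 := by
        have h1 : 1 ≤ (u i' : ℤ) := le_trans hd1 hui'ge
        have h2 : 1 ≤ u i' := by exact_mod_cast h1
        omega
      rw [if_pos (Finsupp.mem_support_iff.mpr hui')]
      have hw2 : (u - Finsupp.single i' 1) + Finsupp.single i' 1 = u := sub_single_add hui'
      set w2 := u - Finsupp.single i' 1 with hw2def
      have hcfw2 : ∀ j, cf w2 v j = cf u V j - (if j = i then 1 else 0) := by
        intro j
        rw [hVdef, ← hw2, cf_shift_pred w2 v i i' j hii]
        ring
      have hsw2 : (∑ k, u k) = (∑ k, w2 k) + 1 := by rw [← hw2]; exact sum_add_single w2 i'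
      have hCw2 : Cond w2 v := by
        constructor
        · omega
        · intro j hj1
          rw [hcfw2 j]
          by_cases hji : j = i
          · rw [if_pos hji, hji]
            constructor
            · omega
            · omega
          · rw [if_neg hji]
            have h3 := hj j hj1
            rw [← hVne j hji]
            constructor
            · omega
            · omega
      rw [Fm_of_cond hCw2, ← Finset.mul_prod_erase _ _ hifil]
      have hP2 : ∏ j ∈ (Finset.univ.filter (fun j : Fin (r+1) => 1 ≤ j.1)).erase i,
          (Nat.choose (v j) (cf w2 v j).toNat : R) * ω ^ (cf w2 v j).toNat = P := by
        rw [hPdef]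
        apply Finset.prod_congr rfl
        intro j hjm
        rw [hcfw2 j, if_neg (Finset.ne_of_mem_erase hjm), sub_zero]
      rw [hP2]
      have hcfi2 : (cf w2 v i).toNat = m - 1 := by
        rw [hcfw2 i, if_pos rfl]
        omega
      rw [hcfi2]
      have h7 : m - 1 + 1 = m := by omega
      have hPas : (Nat.choose (v i + 1) m : R)
          = (Nat.choose (v i) m : R) + (Nat.choose (v i) (m - 1) : R) := by
        have h6 := Nat.choose_succ_succ (v i) (m - 1)
        simp only [Nat.succ_eq_add_one] at h6
        rw [h7] at h6
        rw [h6]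
        push_cast
        ring
      have h8 : ω ^ m = ω ^ (m - 1) * ω := by
        conv_lhs => rw [← h7]
        rw [pow_succ]
      rw [hPas, h8]
      ring
    · have hd0 : cf u V i = 0 := le_antisymm (by omega) hdi0
      have hm0 : m = 0 := by omega
      have hz2 : (if i' ∈ u.support then Fm ω (u - Finsupp.single i' 1) v else 0) = 0 := by
        split_ifs with h
        · apply Fm_of_not
          rintro ⟨hsw, hjw⟩
          have hui' : u i' ≠ 0 := Finsupp.mem_support_iff.mp h
          have hw2 : (u - Finsupp.single i' 1) + Finsupp.single i' 1 = u := sub_single_add hui'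
          have hcf : cf (u - Finsupp.single i' 1) v i = cf u V i - 1 := by
            conv_rhs => rw [hVdef, ← hw2]
            rw [cf_shift_pred _ v i i' i hii, if_pos rfl]
            ring
          have h2 := (hjw i hi1).1
          rw [hcf, hd0] at h2
          omega
        · rfl
      rw [hz2, hm0]
      simp

  · rw [Fm_of_not hC]
    have hT1 : (if i ∈ u.support then Fm ω (u - Finsupp.single i 1) v else 0) = 0 := by
      split_ifs with h
      · apply Fm_of_not
        intro hc
        exact hC (by
          rw [hVdef, ← sub_single_add (Finsupp.mem_support_iff.mp h)]
          exact Cond_shift_same i hc)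
      · rfl
    have hT2 : (if i' ∈ u.support then Fm ω (u - Finsupp.single i' 1) v else 0) = 0 := by
      split_ifs with h
      · apply Fm_of_not
        intro hc
        exact hC (by
          rw [hVdef, ← sub_single_add (Finsupp.mem_support_iff.mp h)]
          exact Cond_shift_pred i i' hii hc)
      · rfl
    rw [hT1, hT2]
    ring

lemma coeff_sigma (hr : 1 ≤ r) (ω : R) :
    ∀ (n : ℕ) (v : Fin (r+1) →₀ ℕ), (∑ k, v k) = n →
      ∀ u : Fin (r+1) →₀ ℕ,
        MvPolynomial.coeff u (sigmaOmega ω (MvPolynomial.monomial v (1:R))) = Fm ω u v := by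
  intro n
  induction n with
  | zero =>
    intro v hv u
    have hv0 : v = 0 := by
      ext k
      exact (Finset.sum_eq_zero_iff.mp hv) k (Finset.mem_univ k)
    subst hv0
    rw [show ((MvPolynomial.monomial (0 : Fin (r+1) →₀ ℕ)) (1:R)) = 1 from by
      rw [MvPolynomial.monomial_zero', MvPolynomial.C_1], map_one, MvPolynomial.coeff_one]
    by_cases hu : u = 0
    · subst hu
      rw [if_pos rfl, Fm_of_cond ⟨rfl, fun j _ => by simp [cf]⟩]
      symm
      apply Finset.prod_eq_one
      intro j _
      simp [cf]
    · rw [if_neg (fun h => hu h.symm), Fm_of_not]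
      rintro ⟨hs, -⟩
      apply hu
      ext k
      simpa using (Finset.sum_eq_zero_iff.mp (by simpa using hs)) k (Finset.mem_univ k)
  | succ n ih =>
    intro v hv u
    have hex : ∃ i, v i ≠ 0 := by
      by_contra h
      push_neg at h
      rw [Finset.sum_eq_zero (fun k _ => h k)] at hv
      omega
    obtain ⟨i, hi⟩ := hex
    have hvsplit : (v - Finsupp.single i 1) + Finsupp.single i 1 = v := sub_single_add hi
    set v' := v - Finsupp.single i 1 with hv'def
    have hsum' : (∑ k, v' k) = n := by
      have h2 := sum_add_single v' i
      rw [hvsplit] at h2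
      omega
    have hmono : (MvPolynomial.monomial v (1:R))
        = MvPolynomial.monomial v' 1 * MvPolynomial.X i := by
      have hX : (MvPolynomial.X i : MvPolynomial (Fin (r+1)) R)
          = MvPolynomial.monomial (Finsupp.single i 1) 1 := rfl
      rw [hX, MvPolynomial.monomial_mul, mul_one, hvsplit]
    rw [hmono, map_mul]
    have hXi : sigmaOmega ω (MvPolynomial.X i : MvPolynomial (Fin (r+1)) R)
        = if i.1 = 0 then MvPolynomial.X i
          else MvPolynomial.X i + MvPolynomial.C ω *
            MvPolynomial.X ⟨i.1 - 1, lt_of_le_of_lt (Nat.sub_le _ _) i.isLt⟩ :=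
      aeval_X _ i
    by_cases hi0 : i.1 = 0
    · have hieq : i = 0 := Fin.ext (by simpa using hi0)
      rw [hXi, if_pos hi0, MvPolynomial.coeff_mul_X', ← hvsplit, hieq, RecA hr ω u v']
      split_ifs with h
      · exact ih v' hsum' _
      · rfl
    · have hi1 : 1 ≤ i.1 := by omega
      have hcomm : sigmaOmega ω (MvPolynomial.monomial v' (1:R)) *
          (MvPolynomial.X i + MvPolynomial.C ω *
            MvPolynomial.X ⟨i.1 - 1, lt_of_le_of_lt (Nat.sub_le _ _) i.isLt⟩)
          = sigmaOmega ω (MvPolynomial.monomial v' (1:R)) * MvPolynomial.X i +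
            MvPolynomial.C ω * (sigmaOmega ω (MvPolynomial.monomial v' (1:R)) *
              MvPolynomial.X ⟨i.1 - 1, lt_of_le_of_lt (Nat.sub_le _ _) i.isLt⟩) := by
        ring
      rw [hXi, if_neg hi0, hcomm, MvPolynomial.coeff_add, MvPolynomial.coeff_C_mul,
        MvPolynomial.coeff_mul_X', MvPolynomial.coeff_mul_X', ← hvsplit, RecB ω u v' i hi1]
      congr 1
      · split_ifs with h
        · exact ih v' hsum' _
        · rfl
      · congr 1
        split_ifs with h
        · exact ih v' hsum' _
        · rfl

end Aux

theorem stmt0 {R : Type*} [CommRing R] (r : ℕ) (hr : 1 ≤ r) (ω : R)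
    (u v : Fin (r + 1) →₀ ℕ) (c : Fin (r + 1) → ℤ)
    (hc : ∀ j : Fin (r + 1), c j =
      ∑ k ∈ Finset.univ.filter (fun k : Fin (r + 1) => j ≤ k),
        ((v k : ℤ) - (u k : ℤ))) :
    (((∑ k, u k) = (∑ k, v k) ∧
        ∀ j : Fin (r + 1), 1 ≤ j.1 → 0 ≤ c j ∧ c j ≤ (v j : ℤ)) →
      MvPolynomial.coeff u (sigmaOmega ω (MvPolynomial.monomial v (1 : R))) =
        ∏ j ∈ Finset.univ.filter (fun j : Fin (r + 1) => 1 ≤ j.1),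
          (Nat.choose (v j) (c j).toNat : R) * ω ^ (c j).toNat) ∧
    ((¬ ((∑ k, u k) = (∑ k, v k) ∧
        ∀ j : Fin (r + 1), 1 ≤ j.1 → 0 ≤ c j ∧ c j ≤ (v j : ℤ))) →
      MvPolynomial.coeff u (sigmaOmega ω (MvPolynomial.monomial v (1 : R))) = 0) := by
  have hcf : c = cf u v := funext fun j => hc j
  subst hcf
  have hmain := coeff_sigma hr ω (∑ k, v k) v rfl u
  constructor
  · intro h
    rw [hmain, Fm_of_cond ⟨h.1, h.2⟩]
  · intro h
    rw [hmain, Fm_of_not (fun hcond => h ⟨hcond.1, hcond.2⟩)]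
end

section
/- Assume in addition that R is an integral domain of characteristic zero and that ω ≠ 0. Let u, v ∈ ℕ^{r+1} be exponent vectors. Then the coefficient of t^u in σ_ω(t^v) is nonzero if and only if there exist natural numbers c_1, …, c_r with 0 ≤ c_j ≤ v_j for all j and v = u + Σ_{j=1}^{r} c_j·(e_j − e_{j−1}); moreover, in that case this coefficient equals ∏_{j=1}^{r} C(v_j, c_j)·ω^{c_j}, where C(·,·) denotes the binomial coefficient. -/
open MvPolynomial Finset

section Aux

variable {R : Type*} [CommRing R] {r : ℕ}

private def pm (r : ℕ) (i : Fin (r + 1)) : Fin (r + 1) :=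
  ⟨i.1 - 1, lt_of_le_of_lt (Nat.sub_le _ _) i.isLt⟩

private def sfun (r : ℕ) (c : Fin (r + 1) → ℕ) (k : Fin (r + 1)) : ℕ :=
  if h : k.1 < r then c ⟨k.1 + 1, by omega⟩ else 0

private noncomputable def Efun (r : ℕ) (v : Fin (r + 1) →₀ ℕ) (c : Fin (r + 1) → ℕ) : Fin (r + 1) →₀ ℕ :=
  ∑ i, (Finsupp.single (pm r i) (c i) + Finsupp.single i (v i - c i))

private def dom (r : ℕ) (v : Fin (r + 1) →₀ ℕ) : Finset (Fin (r + 1) → ℕ) :=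
  Fintype.piFinset fun i => Finset.range (if i.1 = 0 then 1 else v i + 1)

private lemma fin_eq_zero {i : Fin (r + 1)} (h : i.1 = 0) : i = 0 := by
  apply Fin.ext; simpa using h

private lemma mem_dom {v : Fin (r + 1) →₀ ℕ} {c : Fin (r + 1) → ℕ} :
    c ∈ dom r v ↔ c 0 = 0 ∧ ∀ i, c i ≤ v i := by
  simp only [dom, Fintype.mem_piFinset, Finset.mem_range]
  constructor
  · intro h
    have h0 : c 0 < 1 := by simpa using h 0
    have hc0 : c 0 = 0 := by omega
    refine ⟨hc0, fun i => ?_⟩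
    by_cases hi : i.1 = 0
    · rw [fin_eq_zero hi, hc0]; exact Nat.zero_le _
    · have := h i; rw [if_neg hi] at this; omega
  · rintro ⟨hc0, hb⟩ i
    by_cases hi : i.1 = 0
    · rw [if_pos hi, fin_eq_zero hi, hc0]; omega
    · rw [if_neg hi]; have := hb i; omega

private lemma prod_monomial {ι : Type*} (s : Finset ι) (d : ι → Fin (r + 1) →₀ ℕ)
    (a : ι → R) :
    (∏ i ∈ s, (monomial (d i) (a i) : MvPolynomial (Fin (r + 1)) R)) =
      monomial (∑ i ∈ s, d i) (∏ i ∈ s, a i) := by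
  classical
  induction s using Finset.cons_induction with
  | empty => simp
  | cons i s hi ih => rw [Finset.prod_cons, Finset.sum_cons, Finset.prod_cons, ih, monomial_mul]

private lemma factor_expand (ω : R) (i : Fin (r + 1)) (N : ℕ) :
    ((if i.1 = 0 then X i
        else X i + C ω * X ⟨i.1 - 1, lt_of_le_of_lt (Nat.sub_le _ _) i.isLt⟩ :
        MvPolynomial (Fin (r + 1)) R)) ^ N =
      ∑ c ∈ Finset.range (if i.1 = 0 then 1 else N + 1),
        monomial (Finsupp.single (pm r i) c + Finsupp.single i (N - c))
          ((N.choose c : R) * ω ^ c) := by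
  split_ifs with h
  · simp [X_pow_eq_monomial]
  · rw [add_comm (X i), add_pow]
    refine Finset.sum_congr rfl fun c hc => ?_
    have h1 : ((N.choose c : ℕ) : MvPolynomial (Fin (r + 1)) R) =
        C ((N.choose c : ℕ) : R) := by push_cast; rfl
    rw [mul_pow, ← C_pow, X_pow_eq_monomial, X_pow_eq_monomial, h1, C_mul_monomial,
      monomial_mul, mul_comm _ (C ((N.choose c : ℕ) : R)), C_mul_monomial]
    unfold pm
    congr 1
    ring

private lemma sigma_monomial (ω : R) (v : Fin (r + 1) →₀ ℕ) :
    sigmaOmega ω (monomial v (1 : R)) =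
      ∑ c ∈ dom r v,
        monomial (Efun r v c) (∏ i, ((v i).choose (c i) : R) * ω ^ (c i)) := by
  rw [sigmaOmega, aeval_monomial, map_one, one_mul,
    Finsupp.prod_fintype _ _ (fun i => pow_zero _)]
  simp only [factor_expand ω]
  rw [Finset.prod_univ_sum]
  exact Finset.sum_congr rfl fun c _ => prod_monomial _ _ _

private lemma Eapp (hr : 1 ≤ r) {v : Fin (r + 1) →₀ ℕ} {c : Fin (r + 1) → ℕ}
    (hc0 : c 0 = 0) (k : Fin (r + 1)) :
    Efun r v c k = v k - c k + sfun r c k := by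
  unfold Efun
  rw [Finset.sum_apply']
  simp only [Finsupp.add_apply, Finsupp.single_apply, Finset.sum_add_distrib]
  rw [Finset.sum_ite_eq' Finset.univ k (fun i => v i - c i), if_pos (Finset.mem_univ k)]
  rw [add_comm]
  congr 1
  unfold sfun
  split_ifs with h
  · rw [show (∑ i, if pm r i = k then c i else 0) =
        ∑ i, if i = (⟨k.1 + 1, by omega⟩ : Fin (r + 1)) then c i else 0 from
      Finset.sum_congr rfl fun i _ => ?_]
    · rw [Finset.sum_ite_eq' Finset.univ _ c, if_pos (Finset.mem_univ _)]
    · by_cases hi : i.1 = 0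
      · rw [fin_eq_zero hi]
        have h1 : pm r 0 = (0 : Fin (r + 1)) := by unfold pm; apply Fin.ext; simp
        rw [h1, hc0]
        split_ifs <;> rfl
      · have : (pm r i = k) ↔ (i = (⟨k.1 + 1, by omega⟩ : Fin (r + 1))) := by
          unfold pm
          rw [Fin.ext_iff, Fin.ext_iff]
          simp only
          omega
        simp only [this]
  · refine Finset.sum_eq_zero fun i _ => ?_
    rw [if_neg]
    intro hh
    have := congrArg Fin.val hh
    unfold pm at this
    simp only at this
    have hk : k.1 < r + 1 := k.isLt
    have hi : i.1 < r + 1 := i.isLt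
    by_cases hi0 : i.1 = 0 <;> omega

private lemma sum_filter_eq (hr : 1 ≤ r) {c : Fin (r + 1) → ℕ} (hc0 : c 0 = 0)
    (k : Fin (r + 1)) :
    (∑ j ∈ Finset.univ.filter (fun j : Fin (r + 1) => 1 ≤ j.1),
        (c j : ℤ) * ((if k = j then 1 else 0) - (if k.1 = j.1 - 1 then 1 else 0))) =
      (c k : ℤ) - (sfun r c k : ℤ) := by
  simp only [mul_sub, Finset.sum_sub_distrib, mul_ite, mul_one, mul_zero]
  congr 1
  · rw [show (∑ j ∈ Finset.univ.filter (fun j : Fin (r + 1) => 1 ≤ j.1),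
        if k = j then (c j : ℤ) else 0) =
        ∑ j ∈ Finset.univ.filter (fun j : Fin (r + 1) => 1 ≤ j.1),
        if j = k then (c j : ℤ) else 0 from
      Finset.sum_congr rfl fun j _ => by simp [eq_comm]]
    rw [Finset.sum_ite_eq' _ k]
    split_ifs with h
    · rfl
    · simp only [Finset.mem_filter, Finset.mem_univ, true_and, not_le] at h
      have : k = 0 := fin_eq_zero (by omega)
      rw [this, hc0]; rfl
  · unfold sfun
    split_ifs with h
    · rw [show (∑ j ∈ Finset.univ.filter (fun j : Fin (r + 1) => 1 ≤ j.1),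
          if k.1 = j.1 - 1 then (c j : ℤ) else 0) =
          ∑ j ∈ Finset.univ.filter (fun j : Fin (r + 1) => 1 ≤ j.1),
          if j = (⟨k.1 + 1, by omega⟩ : Fin (r + 1)) then (c j : ℤ) else 0 from
        Finset.sum_congr rfl fun j hj => ?_]
      · rw [Finset.sum_ite_eq' _ _]
        rw [if_pos]
        simp only [Finset.mem_filter, Finset.mem_univ, true_and]
        omega
      · simp only [Finset.mem_filter, Finset.mem_univ, true_and] at hj
        have : (k.1 = j.1 - 1) ↔ (j = (⟨k.1 + 1, by omega⟩ : Fin (r + 1))) := by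
          rw [Fin.ext_iff]; simp only; omega
        simp only [this]
    · rw [Finset.sum_eq_zero, Int.natCast_zero]
      intro j hj
      simp only [Finset.mem_filter, Finset.mem_univ, true_and] at hj
      rw [if_neg]
      have := j.isLt
      have := k.isLt
      omega

private lemma keyIff (hr : 1 ≤ r) {u v : Fin (r + 1) →₀ ℕ} {c : Fin (r + 1) → ℕ}
    (hc0 : c 0 = 0) (hb : ∀ i, c i ≤ v i) :
    Efun r v c = u ↔
      ∀ k : Fin (r + 1), (v k : ℤ) = (u k : ℤ) +
        ∑ j ∈ Finset.univ.filter (fun j : Fin (r + 1) => 1 ≤ j.1),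
          (c j : ℤ) * ((if k = j then 1 else 0) - (if k.1 = j.1 - 1 then 1 else 0)) := by
  rw [Finsupp.ext_iff]
  refine forall_congr' fun k => ?_
  rw [Eapp hr hc0 k, sum_filter_eq hr hc0 k]
  have hbk := hb k
  constructor <;> intro h <;> omega

private lemma inj_dom (hr : 1 ≤ r) {v : Fin (r + 1) →₀ ℕ} {c c' : Fin (r + 1) → ℕ}
    (hc0 : c 0 = 0) (hc0' : c' 0 = 0) (hb : ∀ i, c i ≤ v i) (hb' : ∀ i, c' i ≤ v i)
    (h : Efun r v c = Efun r v c') : c = c' := by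
  have hpt : ∀ k : Fin (r + 1), v k - c k + sfun r c k = v k - c' k + sfun r c' k := by
    intro k
    rw [← Eapp hr hc0 k, ← Eapp hr hc0' k, h]
  have key : ∀ d : ℕ, ∀ k : Fin (r + 1), k.1 + d = r → c k = c' k := by
    intro d
    induction d with
    | zero =>
      intro k hk
      have := hpt k
      unfold sfun at this
      rw [dif_neg (by omega), dif_neg (by omega)] at this
      have := hb k; have := hb' k
      omega
    | succ d ih =>
      intro k hk
      have hlt : k.1 < r := by omega
      have hnext := ih ⟨k.1 + 1, by omega⟩ (by simp; omega)
      have := hpt k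
      unfold sfun at this
      rw [dif_pos hlt, dif_pos hlt] at this
      have := hb k; have := hb' k
      omega
  funext k
  exact key (r - k.1) k (by have := k.isLt; omega)

private lemma prod_value_ne_zero [IsDomain R] [CharZero R] {ω : R} (hω : ω ≠ 0)
    {v : Fin (r + 1) →₀ ℕ} {c : Fin (r + 1) → ℕ} (hb : ∀ i, c i ≤ v i) :
    (∏ i, ((v i).choose (c i) : R) * ω ^ (c i)) ≠ 0 := by
  refine Finset.prod_ne_zero_iff.2 fun i _ => mul_ne_zero ?_ (pow_ne_zero _ hω)
  exact_mod_cast Nat.cast_ne_zero.2 (Nat.choose_pos (hb i)).ne'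

private lemma prod_value_filter {ω : R} {v : Fin (r + 1) →₀ ℕ} {c : Fin (r + 1) → ℕ}
    (hc0 : c 0 = 0) :
    (∏ i, ((v i).choose (c i) : R) * ω ^ (c i)) =
      ∏ j ∈ Finset.univ.filter (fun j : Fin (r + 1) => 1 ≤ j.1),
        ((v j).choose (c j) : R) * ω ^ (c j) := by
  rw [Finset.prod_filter_of_ne]
  intro i _ hne
  by_contra hi
  apply hne
  have hi0 : i = 0 := fin_eq_zero (by omega)
  rw [hi0, hc0]
  simp

end Aux

theorem stmt1 {R : Type*} [CommRing R] [IsDomain R] [CharZero R]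
    (r : ℕ) (hr : 1 ≤ r) (ω : R) (hω : ω ≠ 0)
    (u v : Fin (r + 1) →₀ ℕ) :
    (MvPolynomial.coeff u (sigmaOmega ω (MvPolynomial.monomial v (1 : R))) ≠ 0 ↔
      ∃ c : Fin (r + 1) → ℕ,
        (∀ j : Fin (r + 1), 1 ≤ j.1 → c j ≤ v j) ∧
        (∀ k : Fin (r + 1), (v k : ℤ) = (u k : ℤ) +
          ∑ j ∈ Finset.univ.filter (fun j : Fin (r + 1) => 1 ≤ j.1),
            (c j : ℤ) * ((if k = j then 1 else 0) -
              (if k.1 = j.1 - 1 then 1 else 0)))) ∧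
    (∀ c : Fin (r + 1) → ℕ,
      (∀ j : Fin (r + 1), 1 ≤ j.1 → c j ≤ v j) →
      (∀ k : Fin (r + 1), (v k : ℤ) = (u k : ℤ) +
          ∑ j ∈ Finset.univ.filter (fun j : Fin (r + 1) => 1 ≤ j.1),
            (c j : ℤ) * ((if k = j then 1 else 0) -
              (if k.1 = j.1 - 1 then 1 else 0))) →
      MvPolynomial.coeff u (sigmaOmega ω (MvPolynomial.monomial v (1 : R))) =
        ∏ j ∈ Finset.univ.filter (fun j : Fin (r + 1) => 1 ≤ j.1),
          (Nat.choose (v j) (c j) : R) * ω ^ (c j)) := by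
  classical
  have hcoeff : MvPolynomial.coeff u (sigmaOmega ω (MvPolynomial.monomial v (1 : R))) =
      ∑ c ∈ dom r v, if Efun r v c = u then (∏ i, ((v i).choose (c i) : R) * ω ^ (c i)) else 0 := by
    rw [sigma_monomial, MvPolynomial.coeff_sum]
    exact Finset.sum_congr rfl fun c _ => coeff_monomial _ _ _
  -- the "moreover" part
  have main : ∀ c : Fin (r + 1) → ℕ,
      (∀ j : Fin (r + 1), 1 ≤ j.1 → c j ≤ v j) →
      (∀ k : Fin (r + 1), (v k : ℤ) = (u k : ℤ) +
          ∑ j ∈ Finset.univ.filter (fun j : Fin (r + 1) => 1 ≤ j.1),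
            (c j : ℤ) * ((if k = j then 1 else 0) -
              (if k.1 = j.1 - 1 then 1 else 0))) →
      MvPolynomial.coeff u (sigmaOmega ω (MvPolynomial.monomial v (1 : R))) =
        ∏ j ∈ Finset.univ.filter (fun j : Fin (r + 1) => 1 ≤ j.1),
          (Nat.choose (v j) (c j) : R) * ω ^ (c j) := by
    intro c hbound heq
    set c' : Fin (r + 1) → ℕ := fun i => if i = 0 then 0 else c i with hc'def
    have hc0' : c' 0 = 0 := by simp [hc'def]
    have hagree : ∀ j : Fin (r + 1), 1 ≤ j.1 → c' j = c j := by
      intro j hj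
      simp only [hc'def]
      rw [if_neg]
      intro hh; rw [hh] at hj; simp at hj
    have hb' : ∀ i, c' i ≤ v i := by
      intro i
      by_cases hi : i = 0
      · rw [hi, hc0']; exact Nat.zero_le _
      · have h1 : 1 ≤ i.1 := by
          rcases Nat.eq_zero_or_pos i.1 with h | h
          · exact absurd (fin_eq_zero h) hi
          · omega
        rw [hagree i h1]; exact hbound i h1
    have heq' : ∀ k : Fin (r + 1), (v k : ℤ) = (u k : ℤ) +
        ∑ j ∈ Finset.univ.filter (fun j : Fin (r + 1) => 1 ≤ j.1),
          (c' j : ℤ) * ((if k = j then 1 else 0) - (if k.1 = j.1 - 1 then 1 else 0)) := by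
      intro k
      rw [heq k]
      congr 1
      refine Finset.sum_congr rfl fun j hj => ?_
      simp only [Finset.mem_filter, Finset.mem_univ, true_and] at hj
      rw [hagree j hj]
    have hEc' : Efun r v c' = u := (keyIff hr hc0' hb').2 heq'
    have hmem : c' ∈ dom r v := mem_dom.2 ⟨hc0', hb'⟩
    rw [hcoeff, Finset.sum_eq_single_of_mem c' hmem]
    · rw [if_pos hEc', prod_value_filter hc0']
      refine Finset.prod_congr rfl fun j hj => ?_
      simp only [Finset.mem_filter, Finset.mem_univ, true_and] at hj
      rw [hagree j hj]
    · intro b hbmem hbne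
      rw [if_neg]
      intro hEb
      obtain ⟨hb0, hbb⟩ := mem_dom.1 hbmem
      exact hbne (inj_dom hr hb0 hc0' hbb hb' (hEb.trans hEc'.symm))
  refine ⟨⟨fun hne => ?_, fun ⟨c, h1, h2⟩ => ?_⟩, main⟩
  · -- nonzero → exists
    rw [hcoeff] at hne
    obtain ⟨c, hcmem, hcval⟩ := Finset.exists_ne_zero_of_sum_ne_zero hne
    obtain ⟨hc0, hb⟩ := mem_dom.1 hcmem
    have hEc : Efun r v c = u := by
      by_contra hh
      rw [if_neg hh] at hcval
      exact hcval rfl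
    exact ⟨c, fun j _ => hb j, (keyIff hr hc0 hb).1 hEc⟩
  · -- exists → nonzero
    rw [main c h1 h2]
    set c' : Fin (r + 1) → ℕ := fun i => if i = 0 then 0 else c i with hc'def
    have hc0' : c' 0 = 0 := by simp [hc'def]
    have hb' : ∀ i, c' i ≤ v i := by
      intro i
      by_cases hi : i = 0
      · rw [hi, hc0']; exact Nat.zero_le _
      · simp only [hc'def, if_neg hi]
        refine h1 i ?_
        rcases Nat.eq_zero_or_pos i.1 with h | h
        · exact absurd (fin_eq_zero h) hi
        · omega
    have := prod_value_ne_zero (r := r) (v := v) hω hb'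
    rw [prod_value_filter hc0'] at this
    refine fun hzero => this ?_
    rw [← hzero]
    refine Finset.prod_congr rfl fun j hj => ?_
    simp only [Finset.mem_filter, Finset.mem_univ, true_and] at hj
    simp only [hc'def]
    rw [if_neg (fun hh => by rw [hh] at hj; simp at hj)]
end

section
/- Let d ≥ 2 be an integer, let F_0, F_1, …, F_r ∈ R[t_0,…,t_r] be homogeneous polynomials of degree d all of whose coefficients lie in A, and let G_0, G_1, …, G_r ∈ R[t_0,…,t_r] be homogeneous polynomials of degree d all of whose coefficients lie in B, satisfying the compatibility conditions σ_ω(F_0) = G_0 and σ_ω(F_i) = G_i + ω·G_{i−1} for i = 1, …, r. Then the coefficient of t_r^d in F_i is zero for every 0 ≤ i ≤ r; equivalently, the polynomials F_0, F_1, …, F_r have a common zero at the point (0, 0, …, 0, 1). -/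
open MvPolynomial Finset

namespace Stmt6Aux

variable {R : Type*} [CommRing R]

theorem coeff_pderiv' {σ : Type*} [DecidableEq σ] (i : σ) (f : MvPolynomial σ R)
    (m : σ →₀ ℕ) :
    coeff m (pderiv i f) = coeff (m + Finsupp.single i 1) f * ((m i + 1 : ℕ) : R) := by
  conv_lhs => rw [f.as_sum, map_sum]
  rw [MvPolynomial.coeff_sum]
  rw [Finset.sum_eq_single (m + Finsupp.single i 1)]
  · rw [pderiv_monomial, coeff_monomial]
    have h1 : (m + Finsupp.single i 1) - Finsupp.single i 1 = m := by
      ext j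
      rw [Finsupp.tsub_apply, Finsupp.add_apply]
      omega
    rw [h1, if_pos rfl]
    rw [Finsupp.add_apply, Finsupp.single_apply, if_pos rfl]
  · intro v _ hne
    rw [pderiv_monomial, coeff_monomial]
    split_ifs with h
    · rcases Nat.eq_zero_or_pos (v i) with h0 | hpos
      · simp [h0]
      · exfalso; apply hne
        ext j
        have hj := congrArg (fun g : σ →₀ ℕ => g j) h
        rw [Finsupp.tsub_apply] at hj
        rw [Finsupp.add_apply]
        by_cases hji : j = i
        · subst hji
          rw [Finsupp.single_apply, if_pos rfl] at hj ⊢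
          omega
        · rw [Finsupp.single_apply, if_neg (fun hh => hji hh.symm)] at hj ⊢
          omega
    · rfl
  · intro hnot
    rw [MvPolynomial.notMem_support_iff] at hnot
    rw [hnot]
    simp

theorem pderiv_comm' {σ : Type*} [DecidableEq σ] (i j : σ) (f : MvPolynomial σ R) :
    pderiv i (pderiv j f) = pderiv j (pderiv i f) := by
  ext m
  rw [coeff_pderiv', coeff_pderiv', coeff_pderiv', coeff_pderiv']
  rw [add_right_comm m (Finsupp.single i 1) (Finsupp.single j 1)]
  by_cases h : i = j
  · subst h; ring
  · have h1 : ((m + Finsupp.single i 1) : σ →₀ ℕ) j = m j := by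
      rw [Finsupp.add_apply, Finsupp.single_apply, if_neg h, add_zero]
    have h2 : ((m + Finsupp.single j 1) : σ →₀ ℕ) i = m i := by
      rw [Finsupp.add_apply, Finsupp.single_apply, if_neg (fun hh => h hh.symm), add_zero]
    rw [h1, h2]; ring

theorem pderiv_isHomogeneous {σ : Type*} [DecidableEq σ] {f : MvPolynomial σ R} {n : ℕ}
    (hf : f.IsHomogeneous n) (i : σ) : (pderiv i f).IsHomogeneous (n - 1) := by
  intro u hu
  rw [coeff_pderiv'] at hu
  have h1 : coeff (u + Finsupp.single i 1) f ≠ 0 := fun h => hu (by rw [h, zero_mul])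
  have h2 := hf h1
  rw [map_add] at h2
  have h3 : (Finsupp.weight 1) (Finsupp.single i 1) = 1 := by
    rw [Finsupp.weight_apply, Finsupp.sum_single_index] <;> simp
  rw [h3] at h2
  omega



theorem wsingle {σ : Type*} (a : σ) (k : ℕ) :
    Finsupp.weight (1 : σ → ℕ) (Finsupp.single a k) = k := by
  rw [Finsupp.weight_apply, Finsupp.sum_single_index] <;> simp

section Main

variable (r : ℕ)

def pt : Fin (r + 1) → R := fun k => if k = Fin.last r then 1 else 0

noncomputable def pd (j : ℕ) :
    MvPolynomial (Fin (r + 1)) R → MvPolynomial (Fin (r + 1)) R :=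
  fun P => if h : j < r + 1 then pderiv (⟨j, h⟩ : Fin (r + 1)) P else 0

variable {r}

theorem pd_out {j : ℕ} (h : ¬ j < r + 1) (P : MvPolynomial (Fin (r + 1)) R) :
    pd r j P = 0 := dif_neg h

theorem pd_in {j : ℕ} (h : j < r + 1) (P : MvPolynomial (Fin (r + 1)) R) :
    pd r j P = pderiv (⟨j, h⟩ : Fin (r + 1)) P := dif_pos h

theorem pd_add (j : ℕ) (P Q : MvPolynomial (Fin (r + 1)) R) :
    pd r j (P + Q) = pd r j P + pd r j Q := by
  by_cases h : j < r + 1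
  · rw [pd_in h, pd_in h, pd_in h, map_add]
  · rw [pd_out h, pd_out h, pd_out h, add_zero]

theorem pd_zero (j : ℕ) : pd r j (0 : MvPolynomial (Fin (r + 1)) R) = 0 := by
  by_cases h : j < r + 1
  · rw [pd_in h, map_zero]
  · rw [pd_out h]

theorem pd_C (j : ℕ) (a : R) : pd r j (C a : MvPolynomial (Fin (r + 1)) R) = 0 := by
  by_cases h : j < r + 1
  · rw [pd_in h, pderiv_C]
  · rw [pd_out h]

theorem pd_mul (j : ℕ) (P Q : MvPolynomial (Fin (r + 1)) R) :
    pd r j (P * Q) = pd r j P * Q + P * pd r j Q := by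
  by_cases h : j < r + 1
  · rw [pd_in h, pd_in h, pd_in h, pderiv_mul]
  · rw [pd_out h, pd_out h, pd_out h]; ring

theorem pd_Cmul (j : ℕ) (a : R) (P : MvPolynomial (Fin (r + 1)) R) :
    pd r j (C a * P) = C a * pd r j P := by
  rw [pd_mul, pd_C, zero_mul, zero_add]

theorem pd_comm (j k : ℕ) (P : MvPolynomial (Fin (r + 1)) R) :
    pd r j (pd r k P) = pd r k (pd r j P) := by
  by_cases hj : j < r + 1
  · by_cases hk : k < r + 1
    · conv_lhs => rw [pd_in hj, pd_in hk]
      conv_rhs => rw [pd_in hk, pd_in hj]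
      rw [pderiv_comm']
    · rw [pd_out hk (pd r j P), pd_out hk P, pd_zero]
  · rw [pd_out hj (pd r k P), pd_out hj P, pd_zero]

theorem pd_X (j : ℕ) (i : Fin (r + 1)) :
    pd r j (X i : MvPolynomial (Fin (r + 1)) R) = if j = i.1 then 1 else 0 := by
  by_cases h : j < r + 1
  · rw [pd_in h, pderiv_X]
    by_cases hji : (⟨j, h⟩ : Fin (r + 1)) = i
    · subst hji
      rw [Pi.single_eq_same, if_pos rfl]
    · rw [Pi.single_eq_of_ne (fun hh => hji hh.symm), if_neg (fun hh => hji (Fin.ext hh))]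
  · rw [pd_out h, if_neg (by omega : ¬ j = i.1)]

theorem pd_homog {j : ℕ} {P : MvPolynomial (Fin (r + 1)) R} {n : ℕ}
    (hP : P.IsHomogeneous n) : (pd r j P).IsHomogeneous (n - 1) := by
  by_cases h : j < r + 1
  · rw [pd_in h]; exact pderiv_isHomogeneous hP _
  · rw [pd_out h]; exact isHomogeneous_zero _ _ _

theorem evc {P : MvPolynomial (Fin (r + 1)) R} {n : ℕ} (hP : P.IsHomogeneous n) :
    eval (pt r) P = coeff (Finsupp.single (Fin.last r) n) P := by
  rw [eval_eq]
  rw [Finset.sum_eq_single (Finsupp.single (Fin.last r) n)]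
  · rw [Finset.prod_eq_one, mul_one]
    intro i hi
    have : i = Fin.last r := Finset.mem_singleton.mp (Finsupp.support_single_subset hi)
    rw [this]
    simp [pt]
  · intro b hb hne
    have hw : Finsupp.weight (1 : Fin (r+1) → ℕ) b = n :=
      hP (mem_support_iff.mp hb)
    have hex : ∃ i ∈ b.support, i ≠ Fin.last r := by
      by_contra hcon
      push_neg at hcon
      apply hne
      have hb' : b = Finsupp.single (Fin.last r) (b (Fin.last r)) := by
        ext j
        by_cases hj : j = Fin.last r
        · rw [hj, Finsupp.single_apply, if_pos rfl]
        · rw [Finsupp.single_apply, if_neg (fun hh => hj hh.symm)]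
          by_contra hz
          exact hj (hcon j (Finsupp.mem_support_iff.mpr hz))
      rw [hb'] at hw ⊢
      rw [wsingle] at hw
      rw [hw]
    obtain ⟨i, hi, hine⟩ := hex
    rw [Finset.prod_eq_zero hi, mul_zero]
    rw [show pt r i = (0 : R) by simp [pt, hine]]
    exact zero_pow (Finsupp.mem_support_iff.mp hi)
  · intro hnot
    rw [MvPolynomial.notMem_support_iff.mp hnot, zero_mul]

theorem euler {P : MvPolynomial (Fin (r + 1)) R} {n : ℕ} (hP : P.IsHomogeneous n)
    (hn : 1 ≤ n) : eval (pt r) (pd r r P) = (n : R) * eval (pt r) P := by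
  rw [pd_in (by omega)]
  rw [evc (pderiv_isHomogeneous hP _), evc hP, coeff_pderiv']
  have h1 : Finsupp.single (Fin.last r) (n - 1) + Finsupp.single (Fin.last r) 1
      = Finsupp.single (Fin.last r) n := by
    rw [← Finsupp.single_add]
    congr 1
    omega
  have h2 : (Finsupp.single (Fin.last r) (n - 1) : Fin (r+1) →₀ ℕ) (Fin.last r) = n - 1 :=
    Finsupp.single_eq_same
  have h3 : (⟨r, by omega⟩ : Fin (r + 1)) = Fin.last r := rfl
  rw [h3, h1, h2]
  rw [show n - 1 + 1 = n by omega]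
  ring


section Sigma

variable (r : ℕ) {S : Type*}

noncomputable def low : Fin (r + 1) → MvPolynomial (Fin (r + 1)) R := fun i =>
  if h : i.1 = 0 then 0 else X ⟨i.1 - 1, lt_of_le_of_lt (Nat.sub_le _ _) i.isLt⟩

variable {r}

theorem sigma_X (ω : R) (i : Fin (r + 1)) :
    sigmaOmega ω (X i) = X i + C ω * low r i := by
  rw [sigmaOmega, aeval_X, low]
  by_cases h : i.1 = 0
  · rw [if_pos h, dif_pos h, mul_zero, add_zero]
  · rw [if_neg h, dif_neg h]

theorem sigma_C (ω : R) (a : R) :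
    sigmaOmega (r := r) ω (C a) = C a := by
  rw [sigmaOmega, aeval_C, algebraMap_eq]

theorem pd_low (j : ℕ) (i : Fin (r + 1)) :
    pd r j (low r i) = if j + 1 = i.1 then (1 : MvPolynomial (Fin (r+1)) R) else 0 := by
  rw [low]
  by_cases h : i.1 = 0
  · rw [dif_pos h, pd_zero, if_neg (by omega)]
  · rw [dif_neg h, pd_X]
    by_cases h2 : j + 1 = i.1
    · rw [if_pos (show j = i.1 - 1 by omega), if_pos h2]
    · rw [if_neg (show ¬ j = i.1 - 1 by omega), if_neg h2]

theorem eval_low (i : Fin (r + 1)) : eval (pt r) (low r i : MvPolynomial (Fin (r+1)) R) = 0 := by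
  rw [low]
  by_cases h : i.1 = 0
  · rw [dif_pos h, map_zero]
  · rw [dif_neg h, eval_X, pt, if_neg]
    intro hh
    have := congrArg Fin.val hh
    simp only [Fin.val_last] at this
    omega

theorem sigma_pd (ω : R) (j : ℕ) (P : MvPolynomial (Fin (r + 1)) R) :
    pd r j (sigmaOmega ω P) =
      sigmaOmega ω (pd r j P) + C ω * sigmaOmega ω (pd r (j + 1) P) := by
  induction P using MvPolynomial.induction_on generalizing j with
  | C a => rw [sigma_C, pd_C, pd_C, map_zero, mul_zero, add_zero]
  | add p q ihp ihq =>
      rw [map_add, pd_add, ihp, ihq, pd_add, pd_add, map_add, map_add]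
      ring
  | mul_X p i ih =>
      simp only [map_mul, map_add, pd_mul, pd_add, pd_X, pd_C, pd_low, sigma_X,
        zero_mul, mul_zero, add_zero, zero_add, ih, apply_ite (⇑(sigmaOmega (r := r) ω)),
        map_one, map_zero]
      have h01 : ¬ (j = i.1 ∧ j + 1 = i.1) := by omega
      by_cases e1 : j = i.1
      · rw [if_pos e1, if_neg (fun hh => h01 ⟨e1, hh⟩)]
        ring
      · rw [if_neg e1]
        by_cases e2 : j + 1 = i.1
        · rw [if_pos e2]; ring
        · rw [if_neg e2]; ring

theorem eval_sigma (ω : R) (P : MvPolynomial (Fin (r + 1)) R) :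
    eval (pt r) (sigmaOmega ω P) = eval (pt r) P := by
  induction P using MvPolynomial.induction_on with
  | C a => rw [sigma_C]
  | add p q ihp ihq => rw [map_add, map_add, map_add, ihp, ihq]
  | mul_X p i ih =>
      rw [map_mul, map_mul, ih, map_mul, sigma_X, map_add, map_mul, eval_low, eval_C,
        mul_zero, add_zero]

end Sigma

section Mem

variable {K : Type*} [CommSemiring K] [Algebra K R] {A : Subalgebra K R}

theorem mem_pd {P : MvPolynomial (Fin (r + 1)) R} (hP : ∀ m, coeff m P ∈ A) (j : ℕ) :
    ∀ m, coeff m (pd r j P) ∈ A := by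
  intro m
  by_cases h : j < r + 1
  · rw [pd_in h, coeff_pderiv']
    exact mul_mem (hP _) (natCast_mem A _)
  · rw [pd_out h]
    simpa using zero_mem A

theorem mem_eval {P : MvPolynomial (Fin (r + 1)) R} (hP : ∀ m, coeff m P ∈ A) :
    eval (pt r) P ∈ A := by
  apply eval_mem (fun m _ => hP m)
  intro i
  rw [pt]
  split_ifs
  · exact one_mem A
  · exact zero_mem A

end Mem

section KeyChain

variable {K : Type*} [Field K] [Algebra K R] {A B : Subalgebra K R} {ω : R}

theorem key (hAB : A ⊓ B = ⊥) (hω : ∀ f ∈ A, ∀ c : K, f + c • ω ∈ B → c = 0)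
    {x y p q : R} {cp cq : K} (hx : x ∈ A) (hy : y ∈ B)
    (hp : p = algebraMap K R cp) (hq : q = algebraMap K R cq)
    (h : x + ω * p = y + ω * q) :
    p = q ∧ x = y ∧ ∃ c : K, x = algebraMap K R c := by
  have h2 : x + (cp - cq) • ω = y := by
    rw [Algebra.smul_def, map_sub, ← hp, ← hq]
    linear_combination h
  have h4 : x + (cp - cq) • ω ∈ B := by rw [h2]; exact hy
  have h5 : cp = cq := sub_eq_zero.mp (hω x hx (cp - cq) h4)
  have hpq : p = q := by rw [hp, hq, h5]
  have hxy : x = y := by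
    rw [hpq] at h
    exact add_right_cancel h
  refine ⟨hpq, hxy, ?_⟩
  have hxAB : x ∈ A ⊓ B := ⟨hx, by rw [hxy]; exact hy⟩
  rw [hAB] at hxAB
  obtain ⟨c, hc⟩ := Algebra.mem_bot.mp hxAB
  exact ⟨c, hc.symm⟩

theorem chain (hAB : A ⊓ B = ⊥) (hω : ∀ f ∈ A, ∀ c : K, f + c • ω ∈ B → c = 0)
    (x y : ℕ → R) (N : ℕ)
    (hx : ∀ i, i ≤ N → x i ∈ A) (hy : ∀ i, i ≤ N → y i ∈ B)
    (h0 : x 0 = y 0)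
    (hrel : ∀ i, 1 ≤ i → i ≤ N → x i = y i + ω * y (i - 1)) :
    (∀ i, i < N → x i = 0 ∧ y i = 0) ∧
      ∃ c : K, x N = algebraMap K R c ∧ y N = x N := by
  induction N with
  | zero =>
      refine ⟨fun i hi => absurd hi (by omega), ?_⟩
      have hk := key hAB hω (hx 0 le_rfl) (hy 0 le_rfl)
        (p := 0) (cp := 0) (by simp) (q := 0) (cq := 0) (by simp)
        (by simpa using h0)
      obtain ⟨-, hxy, c, hc⟩ := hk
      exact ⟨c, hc, hxy.symm⟩
  | succ n ihn =>
      obtain ⟨hzero, c, hcx, hcy⟩ := ihn (fun i hi => hx i (by omega))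
        (fun i hi => hy i (by omega)) (fun i h1 h2 => hrel i h1 (by omega))
      have hk := key hAB hω (hx (n+1) le_rfl) (hy (n+1) le_rfl)
        (p := 0) (cp := 0) (by simp) (q := y n) (cq := c) (by rw [hcy, hcx])
        (by rw [mul_zero, add_zero]
            have := hrel (n+1) (by omega) le_rfl
            simpa using this)
      obtain ⟨hq0, hxy, c', hc'⟩ := hk
      have hyn : y n = 0 := hq0.symm
      have hxn : x n = 0 := by rw [← hcy, hyn]
      refine ⟨fun i hi => ?_, c', hc', hxy.symm⟩
      rcases Nat.lt_or_ge i n with h | h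
      · exact hzero i h
      · have : i = n := by omega
        rw [this]
        exact ⟨hxn, hyn⟩

end KeyChain

theorem descend (n : ℕ) (Pr : ℕ → Prop)
    (base : ∀ j, n ≤ j → Pr j)
    (step : ∀ j, j < n → Pr (j + 1) → Pr j) : ∀ j, Pr j := by
  have H : ∀ m j, n - j ≤ m → Pr j := by
    intro m
    induction m with
    | zero => intro j hj; exact base j (by omega)
    | succ m ih =>
        intro j _
        by_cases h : n ≤ j
        · exact base j h
        · exact step j (by omega) (ih (j + 1) (by omega))
  intro j
  exact H n j (by omega)


theorem main {K : Type*} [Field K] [CharZero K] [Algebra K R]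
    {r : ℕ} (hr : 1 ≤ r) (ω : R) (A B : Subalgebra K R) (hAB : A ⊓ B = ⊥)
    (hω : ∀ f ∈ A, ∀ c : K, f + c • ω ∈ B → c = 0)
    (d : ℕ) (hd : 2 ≤ d)
    (Fn Gn : ℕ → MvPolynomial (Fin (r + 1)) R)
    (hFhom : ∀ i, i ≤ r → (Fn i).IsHomogeneous d)
    (hFA : ∀ i, i ≤ r → ∀ m, coeff m (Fn i) ∈ A)
    (hGB : ∀ i, i ≤ r → ∀ m, coeff m (Gn i) ∈ B)
    (hcomp0 : sigmaOmega ω (Fn 0) = Gn 0)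
    (hcomp : ∀ i, 1 ≤ i → i ≤ r → sigmaOmega ω (Fn i) = Gn i + C ω * Gn (i - 1)) :
    ∀ i, i ≤ r → eval (pt r) (Fn i) = 0 := by
  -- nontriviality and injectivity
  have hnt : Nontrivial R := by
    rcases subsingleton_or_nontrivial R with hs | hnt
    · exfalso
      have h1 := hω 0 (zero_mem A) 1 (by
        rw [Subsingleton.elim ((0 : R) + (1 : K) • ω) 0]
        exact zero_mem B)
      exact one_ne_zero h1
    · exact hnt
  have hinj : Function.Injective (algebraMap K R) := RingHom.injective _
  -- memberships
  have memF0 : ∀ i, i ≤ r → eval (pt r) (Fn i) ∈ A := fun i hi => mem_eval (hFA i hi)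
  have memG0 : ∀ i, i ≤ r → eval (pt r) (Gn i) ∈ B := fun i hi => mem_eval (hGB i hi)
  have memF1 : ∀ j i, i ≤ r → eval (pt r) (pd r j (Fn i)) ∈ A :=
    fun j i hi => mem_eval (mem_pd (hFA i hi) j)
  have memG1 : ∀ j i, i ≤ r → eval (pt r) (pd r j (Gn i)) ∈ B :=
    fun j i hi => mem_eval (mem_pd (hGB i hi) j)
  have memF2 : ∀ j k i, i ≤ r → eval (pt r) (pd r j (pd r k (Fn i))) ∈ A :=
    fun j k i hi => mem_eval (mem_pd (mem_pd (hFA i hi) k) j)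
  have memG2 : ∀ j k i, i ≤ r → eval (pt r) (pd r j (pd r k (Gn i))) ∈ B :=
    fun j k i hi => mem_eval (mem_pd (mem_pd (hGB i hi) k) j)
  -- relations
  have rel0 : ∀ i, 1 ≤ i → i ≤ r →
      eval (pt r) (Fn i) = eval (pt r) (Gn i) + ω * eval (pt r) (Gn (i - 1)) := by
    intro i h1 h2
    have h := congrArg (eval (pt r)) (hcomp i h1 h2)
    simp only [eval_sigma, map_add, map_mul, eval_C] at h
    linear_combination h
  have rel0' : eval (pt r) (Fn 0) = eval (pt r) (Gn 0) := by
    have h := congrArg (eval (pt r)) hcomp0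
    simp only [eval_sigma] at h
    exact h
  have rel1 : ∀ j i, 1 ≤ i → i ≤ r →
      eval (pt r) (pd r j (Fn i)) + ω * eval (pt r) (pd r (j + 1) (Fn i)) =
        eval (pt r) (pd r j (Gn i)) + ω * eval (pt r) (pd r j (Gn (i - 1))) := by
    intro j i h1 h2
    have h := congrArg (fun Q => eval (pt r) (pd r j Q)) (hcomp i h1 h2)
    simp only [sigma_pd, pd_add, pd_Cmul, map_add, map_mul, eval_C, eval_sigma] at h
    linear_combination h
  have rel1' : ∀ j,
      eval (pt r) (pd r j (Fn 0)) + ω * eval (pt r) (pd r (j + 1) (Fn 0)) =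
        eval (pt r) (pd r j (Gn 0)) := by
    intro j
    have h := congrArg (fun Q => eval (pt r) (pd r j Q)) hcomp0
    simp only [sigma_pd, pd_add, pd_Cmul, map_add, map_mul, eval_C, eval_sigma] at h
    linear_combination h
  have rel2 : ∀ j k i, 1 ≤ i → i ≤ r →
      eval (pt r) (pd r j (pd r k (Fn i))) +
        ω * (eval (pt r) (pd r (j + 1) (pd r k (Fn i))) +
          eval (pt r) (pd r j (pd r (k + 1) (Fn i))) +
          ω * eval (pt r) (pd r (j + 1) (pd r (k + 1) (Fn i)))) =
      eval (pt r) (pd r j (pd r k (Gn i))) +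
        ω * eval (pt r) (pd r j (pd r k (Gn (i - 1)))) := by
    intro j k i h1 h2
    have h := congrArg (fun Q => eval (pt r) (pd r j (pd r k Q))) (hcomp i h1 h2)
    simp only [sigma_pd, pd_add, pd_Cmul, map_add, map_mul, eval_C, eval_sigma] at h
    linear_combination h
  have rel2' : ∀ j k,
      eval (pt r) (pd r j (pd r k (Fn 0))) +
        ω * (eval (pt r) (pd r (j + 1) (pd r k (Fn 0))) +
          eval (pt r) (pd r j (pd r (k + 1) (Fn 0))) +
          ω * eval (pt r) (pd r (j + 1) (pd r (k + 1) (Fn 0)))) =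
      eval (pt r) (pd r j (pd r k (Gn 0))) := by
    intro j k
    have h := congrArg (fun Q => eval (pt r) (pd r j (pd r k Q))) hcomp0
    simp only [sigma_pd, pd_add, pd_Cmul, map_add, map_mul, eval_C, eval_sigma] at h
    linear_combination h
  -- Euler identities
  have eulerF : ∀ i, i ≤ r → eval (pt r) (pd r r (Fn i)) = (d : R) * eval (pt r) (Fn i) :=
    fun i hi => euler (hFhom i hi) (by omega)
  have eulerF2 : ∀ j i, i ≤ r →
      eval (pt r) (pd r j (pd r r (Fn i))) =
        ((d - 1 : ℕ) : R) * eval (pt r) (pd r j (Fn i)) := by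
    intro j i hi
    rw [pd_comm]
    exact euler (pd_homog (hFhom i hi)) (by omega)
  have inner0 : ∀ jj (P : MvPolynomial (Fin (r + 1)) R),
      eval (pt r) (pd r jj (pd r (r + 1) P)) = 0 := by
    intro jj P
    rw [pd_out (by omega) P, pd_zero, map_zero]
  -- Stage 0
  obtain ⟨zero0, c0, hc0x, hc0y⟩ := chain hAB hω
    (fun i => eval (pt r) (Fn i)) (fun i => eval (pt r) (Gn i)) r
    (fun i hi => memF0 i hi) (fun i hi => memG0 i hi) rel0'
    (fun i h1 h2 => rel0 i h1 h2)
  -- Stage 1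
  have S1 : ∀ j,
      (∀ i, i < j → i ≤ r →
        eval (pt r) (pd r j (Fn i)) = 0 ∧ eval (pt r) (pd r j (Gn i)) = 0) ∧
      (j ≤ r → ∃ c : K, eval (pt r) (pd r j (Fn j)) = algebraMap K R c ∧
        eval (pt r) (pd r j (Gn j)) = eval (pt r) (pd r j (Fn j))) := by
    refine descend (r + 1) _ ?_ ?_
    · intro j hj
      constructor
      · intro i _ _
        constructor
        · rw [pd_out (by omega) (Fn i), map_zero]
        · rw [pd_out (by omega) (Gn i), map_zero]
      · intro hjr
        exact absurd hjr (by omega)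
    · intro j hj ih
      obtain ⟨ihz, -⟩ := ih
      have hvan : ∀ i, i ≤ j → eval (pt r) (pd r (j + 1) (Fn i)) = 0 :=
        fun i hi => (ihz i (by omega) (by omega)).1
      have h0 : eval (pt r) (pd r j (Fn 0)) = eval (pt r) (pd r j (Gn 0)) := by
        have h := rel1' j
        rw [hvan 0 (by omega), mul_zero, add_zero] at h
        exact h
      have hrel : ∀ i, 1 ≤ i → i ≤ j →
          eval (pt r) (pd r j (Fn i)) =
            eval (pt r) (pd r j (Gn i)) + ω * eval (pt r) (pd r j (Gn (i - 1))) := by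
        intro i h1 h2
        have h := rel1 j i h1 (by omega)
        rw [hvan i h2, mul_zero, add_zero] at h
        exact h
      obtain ⟨hz, sc⟩ := chain hAB hω
        (fun i => eval (pt r) (pd r j (Fn i))) (fun i => eval (pt r) (pd r j (Gn i))) j
        (fun i hi => memF1 j i (by omega)) (fun i hi => memG1 j i (by omega)) h0 hrel
      exact ⟨fun i hi _ => hz i hi, fun _ => sc⟩
  have stair1 : ∀ j, j + 1 ≤ r →
      eval (pt r) (pd r (j + 1) (Fn (j + 1))) = eval (pt r) (pd r j (Fn j)) := by
    intro j hj
    obtain ⟨cj, hcjx, hcjy⟩ := (S1 j).2 (by omega)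
    obtain ⟨cj1, hcj1x, hcj1y⟩ := (S1 (j + 1)).2 hj
    have h := rel1 j (j + 1) (by omega) hj
    have hk := key hAB hω (memF1 j (j + 1) hj) (memG1 j (j + 1) hj)
      hcj1x (q := eval (pt r) (pd r j (Gn j))) (cq := cj) (by rw [hcjy, hcjx])
      (by simpa using h)
    obtain ⟨hpq, -, -⟩ := hk
    rw [hpq, hcjy]
  have psi_eq : ∀ j, j ≤ r →
      eval (pt r) (pd r j (Fn j)) = eval (pt r) (pd r r (Fn r)) := by
    refine descend (r + 1) (fun j => j ≤ r → _) ?_ ?_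
    · intro j hj hjr
      exact absurd hjr (by omega)
    · intro j hj ih hjr
      by_cases hje : j = r
      · subst hje; rfl
      · rw [← stair1 j (by omega)]
        exact ih (by omega)
  -- Stage 2, family (j, r)
  have SA : ∀ j,
      (∀ i, i < j → i ≤ r →
        eval (pt r) (pd r j (pd r r (Fn i))) = 0 ∧
        eval (pt r) (pd r j (pd r r (Gn i))) = 0) ∧
      (j ≤ r → ∃ c : K,
        eval (pt r) (pd r j (pd r r (Fn j))) = algebraMap K R c ∧
        eval (pt r) (pd r j (pd r r (Gn j))) = eval (pt r) (pd r j (pd r r (Fn j)))) := by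
    refine descend (r + 1) _ ?_ ?_
    · intro j hj
      constructor
      · intro i _ _
        constructor
        · rw [pd_out (by omega) (pd r r (Fn i)), map_zero]
        · rw [pd_out (by omega) (pd r r (Gn i)), map_zero]
      · intro hjr
        exact absurd hjr (by omega)
    · intro j hj ih
      obtain ⟨ihz, -⟩ := ih
      have hvan : ∀ i, i ≤ j → eval (pt r) (pd r (j + 1) (pd r r (Fn i))) = 0 :=
        fun i hi => (ihz i (by omega) (by omega)).1
      have h0 : eval (pt r) (pd r j (pd r r (Fn 0))) =
          eval (pt r) (pd r j (pd r r (Gn 0))) := by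
        have h := rel2' j r
        rw [hvan 0 (by omega), inner0 j (Fn 0), inner0 (j + 1) (Fn 0)] at h
        linear_combination h
      have hrel : ∀ i, 1 ≤ i → i ≤ j →
          eval (pt r) (pd r j (pd r r (Fn i))) =
            eval (pt r) (pd r j (pd r r (Gn i))) +
              ω * eval (pt r) (pd r j (pd r r (Gn (i - 1)))) := by
        intro i h1 h2
        have h := rel2 j r i h1 (by omega)
        rw [hvan i h2, inner0 j (Fn i), inner0 (j + 1) (Fn i)] at h
        linear_combination h
      obtain ⟨hz, sc⟩ := chain hAB hω
        (fun i => eval (pt r) (pd r j (pd r r (Fn i))))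
        (fun i => eval (pt r) (pd r j (pd r r (Gn i)))) j
        (fun i hi => memF2 j r i (by omega)) (fun i hi => memG2 j r i (by omega)) h0 hrel
      exact ⟨fun i hi _ => hz i hi, fun _ => sc⟩
  -- Stage 2, family (j, r-1)
  have hk1 : r - 1 + 1 = r := by omega
  have SB : ∀ j,
      (∀ i, i + 1 < j → i ≤ r →
        eval (pt r) (pd r j (pd r (r - 1) (Fn i))) = 0 ∧
        eval (pt r) (pd r j (pd r (r - 1) (Gn i))) = 0) ∧
      (1 ≤ j → ∃ c : K,
        eval (pt r) (pd r j (pd r (r - 1) (Fn (j - 1)))) = algebraMap K R c ∧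
        eval (pt r) (pd r j (pd r (r - 1) (Gn (j - 1)))) =
          eval (pt r) (pd r j (pd r (r - 1) (Fn (j - 1))))) := by
    refine descend (r + 1) _ ?_ ?_
    · intro j hj
      constructor
      · intro i _ _
        constructor
        · rw [pd_out (by omega) (pd r (r - 1) (Fn i)), map_zero]
        · rw [pd_out (by omega) (pd r (r - 1) (Gn i)), map_zero]
      · intro h1
        refine ⟨0, ?_, ?_⟩
        · rw [pd_out (by omega) (pd r (r - 1) (Fn (j - 1))), map_zero, map_zero]
        · rw [pd_out (by omega) (pd r (r - 1) (Gn (j - 1))), map_zero,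
            pd_out (by omega) (pd r (r - 1) (Fn (j - 1))), map_zero]
    · intro j hj ih
      by_cases hj0 : j = 0
      · subst hj0
        exact ⟨fun i hi _ => absurd hi (by omega), fun h1 => absurd h1 (by omega)⟩
      · have hj1 : 1 ≤ j := by omega
        have hjr : j ≤ r := by omega
        have hvanB : ∀ i, i < j → eval (pt r) (pd r (j + 1) (pd r (r - 1) (Fn i))) = 0 :=
          fun i hi => ((ih.1) i (by omega) (by omega)).1
        have hvanA : ∀ i, i < j → eval (pt r) (pd r j (pd r r (Fn i))) = 0 :=
          fun i hi => ((SA j).1 i hi (by omega)).1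
        have hvanA1 : ∀ i, i < j + 1 → eval (pt r) (pd r (j + 1) (pd r r (Fn i))) = 0 :=
          fun i hi => ((SA (j + 1)).1 i hi (by omega)).1
        have h0 : eval (pt r) (pd r j (pd r (r - 1) (Fn 0))) =
            eval (pt r) (pd r j (pd r (r - 1) (Gn 0))) := by
          have h := rel2' j (r - 1)
          rw [hk1] at h
          rw [hvanB 0 (by omega), hvanA 0 (by omega), hvanA1 0 (by omega)] at h
          linear_combination h
        have hrel : ∀ i, 1 ≤ i → i ≤ j - 1 →
            eval (pt r) (pd r j (pd r (r - 1) (Fn i))) =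
              eval (pt r) (pd r j (pd r (r - 1) (Gn i))) +
                ω * eval (pt r) (pd r j (pd r (r - 1) (Gn (i - 1)))) := by
          intro i h1 h2
          have h := rel2 j (r - 1) i h1 (by omega)
          rw [hk1] at h
          rw [hvanB i (by omega), hvanA i (by omega), hvanA1 i (by omega)] at h
          linear_combination h
        obtain ⟨hz, sc⟩ := chain hAB hω
          (fun i => eval (pt r) (pd r j (pd r (r - 1) (Fn i))))
          (fun i => eval (pt r) (pd r j (pd r (r - 1) (Gn i)))) (j - 1)
          (fun i hi => memF2 j (r - 1) i (by omega))
          (fun i hi => memG2 j (r - 1) i (by omega)) h0 hrel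
        exact ⟨fun i hi _ => hz i (by omega), fun _ => sc⟩
  -- Stage-2 staircase
  have stair2 : ∀ j, 1 ≤ j → j ≤ r →
      eval (pt r) (pd r (j + 1) (pd r (r - 1) (Fn j))) +
        ((d - 1 : ℕ) : R) * eval (pt r) (pd r j (Fn j)) =
      eval (pt r) (pd r j (pd r (r - 1) (Fn (j - 1)))) := by
    intro j h1 hjr
    obtain ⟨cU, hcUx, hcUy⟩ := (SB j).2 h1
    obtain ⟨cU1, hcU1x, hcU1y⟩ := (SB (j + 1)).2 (by omega)
    rw [Nat.add_sub_cancel] at hcU1x hcU1y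
    obtain ⟨cpsi, hcpsix, hcpsiy⟩ := (S1 j).2 hjr
    have h := rel2 j (r - 1) j h1 hjr
    rw [hk1] at h
    rw [((SA (j + 1)).1 j (by omega) hjr).1] at h
    have h' : eval (pt r) (pd r j (pd r (r - 1) (Fn j))) +
        ω * (eval (pt r) (pd r (j + 1) (pd r (r - 1) (Fn j))) +
          eval (pt r) (pd r j (pd r r (Fn j)))) =
        eval (pt r) (pd r j (pd r (r - 1) (Gn j))) +
          ω * eval (pt r) (pd r j (pd r (r - 1) (Gn (j - 1)))) := by
      linear_combination h
    have hp : eval (pt r) (pd r (j + 1) (pd r (r - 1) (Fn j))) +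
        eval (pt r) (pd r j (pd r r (Fn j))) =
        algebraMap K R (cU1 + ((d - 1 : ℕ) : K) * cpsi) := by
      rw [hcU1x, eulerF2 j j hjr, hcpsix, map_add, map_mul, map_natCast]
    have hq : eval (pt r) (pd r j (pd r (r - 1) (Gn (j - 1)))) = algebraMap K R cU := by
      rw [hcUy, hcUx]
    have hkey := key hAB hω (memF2 j (r - 1) j hjr) (memG2 j (r - 1) j hjr) hp hq h'
    obtain ⟨hpq, -, -⟩ := hkey
    rw [← hcUy, ← hpq, eulerF2 j j hjr]
  -- closed form for the staircase values
  have Uval : ∀ j, 1 ≤ j → j ≤ r + 1 →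
      eval (pt r) (pd r j (pd r (r - 1) (Fn (j - 1)))) =
        ((r + 1 - j : ℕ) : R) *
          (((d - 1 : ℕ) : R) * eval (pt r) (pd r r (Fn r))) := by
    refine descend (r + 2) (fun j => 1 ≤ j → j ≤ r + 1 → _) ?_ ?_
    · intro j hj h1 hjr
      exact absurd hjr (by omega)
    · intro j hj ih h1 hjr
      by_cases hje : j = r + 1
      · subst hje
        rw [pd_out (by omega) (pd r (r - 1) (Fn (r + 1 - 1))), map_zero]
        rw [show r + 1 - (r + 1) = 0 by omega]
        simp
      · have hjr' : j ≤ r := by omega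
        have hstep := stair2 j h1 hjr'
        have hih := ih (by omega) (by omega)
        rw [Nat.add_sub_cancel] at hih
        rw [← hstep, hih, psi_eq j hjr']
        have hcast : ((r + 1 - j : ℕ) : R) = ((r + 1 - (j + 1) : ℕ) : R) + 1 := by
          have : r + 1 - j = (r + 1 - (j + 1)) + 1 := by omega
          rw [this]
          push_cast
          ring
        rw [hcast]
        ring
  -- final relation at (0, r-1), i = 0
  obtain ⟨cU1, hU1x, hU1y⟩ := (SB 1).2 le_rfl
  obtain ⟨cpsi0, hpsi0x, hpsi0y⟩ := (S1 0).2 (by omega)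
  have hfin : eval (pt r) (pd r 1 (pd r (r - 1) (Fn 0))) +
      eval (pt r) (pd r 0 (pd r r (Fn 0))) = 0 := by
    have h := rel2' 0 (r - 1)
    rw [hk1] at h
    rw [((SA 1).1 0 (by omega) (by omega)).1] at h
    have h' : eval (pt r) (pd r 0 (pd r (r - 1) (Fn 0))) +
        ω * (eval (pt r) (pd r 1 (pd r (r - 1) (Fn 0))) +
          eval (pt r) (pd r 0 (pd r r (Fn 0)))) =
        eval (pt r) (pd r 0 (pd r (r - 1) (Gn 0))) + ω * 0 := by
      rw [mul_zero, add_zero]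
      linear_combination h
    have hp : eval (pt r) (pd r 1 (pd r (r - 1) (Fn 0))) +
        eval (pt r) (pd r 0 (pd r r (Fn 0))) =
        algebraMap K R (cU1 + ((d - 1 : ℕ) : K) * cpsi0) := by
      rw [show (1:ℕ) - 1 = 0 by omega] at hU1x
      rw [hU1x, eulerF2 0 0 (by omega), hpsi0x, map_add, map_mul, map_natCast]
    have hq : (0 : R) = algebraMap K R 0 := by rw [map_zero]
    have hkey := key hAB hω (memF2 0 (r - 1) 0 (by omega))
      (memG2 0 (r - 1) 0 (by omega)) hp hq h'
    exact hkey.1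
  -- put the pieces together
  have hU1 := Uval 1 le_rfl (by omega)
  rw [show (1:ℕ) - 1 = 0 by omega] at hU1
  rw [show r + 1 - 1 = r by omega] at hU1
  have hX0 : eval (pt r) (pd r 0 (pd r r (Fn 0))) =
      ((d - 1 : ℕ) : R) * eval (pt r) (pd r r (Fn r)) := by
    rw [eulerF2 0 0 (by omega), psi_eq 0 (by omega)]
  rw [hU1, hX0] at hfin
  obtain ⟨cpsir, hpsirx, hpsiry⟩ := (S1 r).2 le_rfl
  have hfin2 : algebraMap K R (((r + 1) * (d - 1) : ℕ) : K) * algebraMap K R cpsir = 0 := by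
    rw [map_natCast, ← hpsirx]
    push_cast
    linear_combination hfin
  have hfin3 : (((r + 1) * (d - 1) : ℕ) : K) * cpsir = 0 := by
    apply hinj
    rw [map_mul, map_zero]
    exact hfin2
  have hcne : (((r + 1) * (d - 1) : ℕ) : K) ≠ 0 := by
    rw [Nat.cast_ne_zero]
    have : d - 1 ≠ 0 := by omega
    positivity
  have hpsir0 : cpsir = 0 := by
    rcases mul_eq_zero.mp hfin3 with h | h
    · exact absurd h hcne
    · exact h
  have hXrr : eval (pt r) (pd r r (Fn r)) = 0 := by
    rw [hpsirx, hpsir0, map_zero]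
  have hd0 : (d : R) * eval (pt r) (Fn r) = 0 := by
    rw [← eulerF r le_rfl]
    exact hXrr
  have hc00 : algebraMap K R ((d : K) * c0) = 0 := by
    rw [map_mul, map_natCast, ← hc0x]
    exact hd0
  have hc0z : c0 = 0 := by
    have h : (d : K) * c0 = 0 := by
      apply hinj
      rw [map_mul, map_zero]
      rw [map_mul] at hc00
      exact hc00
    rcases mul_eq_zero.mp h with h2 | h2
    · exact absurd h2 (Nat.cast_ne_zero.mpr (by omega))
    · exact h2
  have hFr : eval (pt r) (Fn r) = 0 := by rw [hc0x, hc0z, map_zero]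
  intro i hi
  rcases Nat.lt_or_ge i r with h | h
  · exact (zero0 i h).1
  · have : i = r := by omega
    rw [this]
    exact hFr


end Main
end Stmt6Aux

theorem stmt6 {K R : Type*} [Field K] [CharZero K] [CommRing R] [Algebra K R]
    (r : ℕ) (hr : 1 ≤ r) (ω : R)
    (A B : Subalgebra K R) (hAB : A ⊓ B = ⊥)
    (hω : ∀ f ∈ A, ∀ c : K, f + c • ω ∈ B → c = 0)
    (d : ℕ) (hd : 2 ≤ d)
    (F G : Fin (r + 1) → MvPolynomial (Fin (r + 1)) R)
    (hFhom : ∀ i, (F i).IsHomogeneous d) (hGhom : ∀ i, (G i).IsHomogeneous d)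
    (hFA : ∀ i, ∀ m : Fin (r + 1) →₀ ℕ, MvPolynomial.coeff m (F i) ∈ A)
    (hGB : ∀ i, ∀ m : Fin (r + 1) →₀ ℕ, MvPolynomial.coeff m (G i) ∈ B)
    (hcomp0 : sigmaOmega ω (F 0) = G 0)
    (hcomp : ∀ i : Fin (r + 1), 1 ≤ i.1 →
      sigmaOmega ω (F i) = G i + MvPolynomial.C ω *
        G ⟨i.1 - 1, lt_of_le_of_lt (Nat.sub_le _ _) i.isLt⟩) :
    ∀ i : Fin (r + 1),
      MvPolynomial.coeff (Finsupp.single (Fin.last r) d) (F i) = 0 ∧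
      MvPolynomial.eval
        (fun k : Fin (r + 1) => if k = Fin.last r then (1 : R) else 0) (F i) = 0 := by
  have hzero0 : (⟨0, by omega⟩ : Fin (r + 1)) = 0 := by
    ext
    simp
  have hmain := Stmt6Aux.main hr ω A B hAB hω d hd
    (fun n => if h : n < r + 1 then F ⟨n, h⟩ else 0)
    (fun n => if h : n < r + 1 then G ⟨n, h⟩ else 0)
    (fun i hi => by
      rw [dif_pos (show i < r + 1 by omega)]; exact hFhom _)
    (fun i hi m => by
      rw [dif_pos (show i < r + 1 by omega)]; exact hFA _ m)
    (fun i hi m => by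
      rw [dif_pos (show i < r + 1 by omega)]; exact hGB _ m)
    (by
        rw [dif_pos (show 0 < r + 1 by omega), dif_pos (show 0 < r + 1 by omega), hzero0]
        exact hcomp0)
    (by intro i h1 h2
        rw [dif_pos (show i < r + 1 by omega), dif_pos (show i < r + 1 by omega),
          dif_pos (show i - 1 < r + 1 by omega)]
        exact hcomp ⟨i, by omega⟩ h1)
  have hkey : ∀ i : Fin (r + 1), eval (Stmt6Aux.pt r) (F i) = 0 := by
    intro i
    have h := hmain i.1 (by omega)
    rw [dif_pos i.isLt, Fin.eta] at h
    exact h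
  intro i
  constructor
  · rw [← Stmt6Aux.evc (hFhom i)]
    exact hkey i
  · exact hkey i
end

section
/- Let M be an additive commutative group, let g : M → M be an additive group endomorphism, let d be an integer, and let (L_j)_{j ∈ ℕ} be a sequence of elements of M satisfying g(L_j) = g(L_0) + d·L_{j−1} for every j ≥ 1. If L_j = L_{j+ℓ} for some integers j ≥ 0 and ℓ ≥ 1, then Σ_{k=j+1}^{j+ℓ} d^k · g^{j+ℓ−k}(L_0) = 0. -/
theorem stmt10 {M : Type*} [AddCommGroup M] (g : AddMonoid.End M) (d : ℤ)
    (L : ℕ → M) (hL : ∀ j : ℕ, 1 ≤ j → g (L j) = g (L 0) + d • L (j - 1))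
    (j ℓ : ℕ) (hℓ : 1 ≤ ℓ) (hper : L j = L (j + ℓ)) :
    ∑ k ∈ Finset.Icc (j + 1) (j + ℓ), d ^ k • (g ^ (j + ℓ - k)) (L 0) = 0 := by
  have key : ∀ m jj : ℕ, m ≤ jj →
      (g ^ m) (L jj) =
        (∑ i ∈ Finset.range m, d ^ i • (g ^ (m - i)) (L 0)) + d ^ m • L (jj - m) := by
    intro m
    induction m with
    | zero => intro jj _; simp
    | succ m ih =>
      intro jj h
      have h1 : m ≤ jj := Nat.le_of_succ_le h
      have hjm : 1 ≤ jj - m := by omega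
      have hpow : ((g : AddMonoid.End M) ^ (m + 1)) (L jj) = g ((g ^ m) (L jj)) := by
        rw [pow_succ']; rfl
      rw [hpow, ih jj h1, map_add, map_sum, map_zsmul, hL (jj - m) hjm]
      have hidx : jj - m - 1 = jj - (m + 1) := by omega
      rw [hidx, Finset.sum_range_succ]
      have hterm : ∀ i ∈ Finset.range m,
          g (d ^ i • (g ^ (m - i)) (L 0)) = d ^ i • (g ^ (m + 1 - i)) (L 0) := by
        intro i hi
        have hi' : i < m := Finset.mem_range.mp hi
        have : m + 1 - i = (m - i) + 1 := by omega
        rw [map_zsmul, this, pow_succ']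
        rfl
      rw [Finset.sum_congr rfl hterm]
      have : m + 1 - m = 1 := by omega
      rw [this, smul_add, smul_smul, ← pow_succ]
      have : ((g : AddMonoid.End M) ^ 1) (L 0) = g (L 0) := by simp
      rw [this]
      abel
  have e1 := key (j + ℓ) (j + ℓ) le_rfl
  have e2 := key j j le_rfl
  rw [Nat.sub_self] at e1 e2
  have e3 : (g ^ (j + ℓ)) (L j) =
      (∑ i ∈ Finset.range j, d ^ i • (g ^ (j + ℓ - i)) (L 0)) + d ^ j • (g ^ ℓ) (L 0) := by
    have hcomp : ((g : AddMonoid.End M) ^ (j + ℓ)) (L j) = (g ^ ℓ) ((g ^ j) (L j)) := by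
      rw [add_comm j ℓ, pow_add]; rfl
    rw [hcomp, e2, map_add, map_sum, map_zsmul]
    congr 1
    refine Finset.sum_congr rfl fun i hi => ?_
    have hi' : i < j := Finset.mem_range.mp hi
    rw [map_zsmul, show j + ℓ - i = ℓ + (j - i) by omega, pow_add]
    rfl
  have e4 : (g ^ (j + ℓ)) (L j) = (g ^ (j + ℓ)) (L (j + ℓ)) := by rw [hper]
  rw [e3, e1] at e4
  have hsplit : Finset.range (j + ℓ) = Finset.range j ∪ Finset.Ico j (j + ℓ) := by
    rw [Finset.range_eq_Ico, Finset.range_eq_Ico, Finset.Ico_union_Ico_eq_Ico] <;> omega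
  have hdisj : Disjoint (Finset.range j) (Finset.Ico j (j + ℓ)) := by
    rw [Finset.disjoint_left]
    intro a ha hb
    simp only [Finset.mem_range] at ha
    simp only [Finset.mem_Ico] at hb
    omega
  rw [hsplit, Finset.sum_union hdisj, add_assoc] at e4
  have e5 := add_left_cancel e4
  have hlt : j < j + ℓ := by omega
  rw [Finset.sum_eq_sum_Ico_succ_bot hlt, show j + ℓ - j = ℓ by omega] at e5
  rw [add_assoc, left_eq_add] at e5
  have hicc : Finset.Icc (j + 1) (j + ℓ) = Finset.Ico (j + 1) (j + ℓ + 1) := by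
    rw [Finset.Ico_add_one_right_eq_Icc]
  rw [hicc, Finset.sum_Ico_succ_top (by omega : j + 1 ≤ j + ℓ),
    show j + ℓ - (j + ℓ) = 0 by omega, pow_zero]
  simpa using e5
end
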